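/- arXiv:1705.08553 — 4 statements merged into one kernel-verified Lean document; each statement's English description precedes it below -/
import Mathlib

section
/- Martingale method: Suppose Assumptions (i)–(iii) hold for the sequence H_0 = 0 ≤ H_1 ≤ ⋯ ≤ H_N described below. Then for every ψ ∈ ℋ with G_N ψ = 0, one has ⟨ψ, H_N ψ⟩ ≥ γ (1 − ε√(1+ℓ))² ‖ψ‖². -/
open RCLike ContinuousLinearMap Finset
open scoped InnerProductSpace

section MartingaleHelpers
variable {H : Type*} [NormedAddCommGroup H] [InnerProductSpace ℂ H] [CompleteSpace H]

/-- Move a self-adjoint operator across the inner product. -/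
lemma martingale_sa_inner {T : H →L[ℂ] H} (hT : IsSelfAdjoint T) (x y : H) :
    ⟪T x, y⟫_ℂ = ⟪x, T y⟫_ℂ := by
  conv_lhs => rw [← hT.adjoint_eq]
  exact ContinuousLinearMap.adjoint_inner_left T y x

/-- Real part of inner product with a real scalar action. -/
lemma martingale_re_inner_smul_right {x y : H} (r : ℝ) :
    re ⟪x, r • y⟫_ℂ = r * re ⟪x, y⟫_ℂ := by
  rw [RCLike.real_smul_eq_coe_smul (K := ℂ), inner_smul_right]
  simp [RCLike.re_to_complex, Complex.re_ofReal_mul]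

/-- If `T` is a positive operator and `⟪x, T x⟫` has vanishing real part, then `T x = 0`. -/
lemma martingale_pos_inner_zero {T : H →L[ℂ] H} (hT : T.IsPositive) {x : H}
    (hx : re ⟪x, T x⟫_ℂ = 0) : T x = 0 := by
  have key : ∀ y : H, re ⟪T y, x⟫_ℂ = 0 := by
    intro y
    set c : ℝ := re ⟪T y, x⟫_ℂ with hc
    set d : ℝ := re ⟪T y, y⟫_ℂ with hd'
    have hd : 0 ≤ d := hT.re_inner_nonneg_left y
    have hq : ∀ t : ℝ, 0 ≤ t ^ 2 * d + 2 * t * c := by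
      intro t
      have h0 := hT.re_inner_nonneg_left (x + (t : ℂ) • y)
      have e1 : re ⟪T x, x⟫_ℂ = 0 := by rw [inner_re_symm]; exact hx
      have e2 : re ⟪T x, y⟫_ℂ = c := by
        rw [hc, martingale_sa_inner hT.isSelfAdjoint x y, inner_re_symm]
      have expand : ⟪T (x + (t : ℂ) • y), x + (t : ℂ) • y⟫_ℂ
          = ⟪T x, x⟫_ℂ + (t : ℂ) * ⟪T x, y⟫_ℂ + (t : ℂ) * ⟪T y, x⟫_ℂ
            + (t : ℂ) * ((t : ℂ) * ⟪T y, y⟫_ℂ) := by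
        rw [map_add, map_smul, inner_add_left, inner_add_right, inner_add_right,
          inner_smul_left, inner_smul_right, inner_smul_right, inner_smul_left,
          Complex.conj_ofReal]
        ring
      rw [expand] at h0
      simp only [map_add, RCLike.re_to_complex, Complex.re_ofReal_mul] at h0 e1 e2
      simp only [RCLike.re_to_complex] at hc hd'
      rw [e1, e2, ← hc, ← hd'] at h0
      nlinarith [h0]
    have h2 := hq (-(c / (d + 1)))
    have hd1 : (0 : ℝ) < d + 1 := by linarith
    have h4 : (-(c / (d + 1))) ^ 2 * d + 2 * (-(c / (d + 1))) * c
        = (c ^ 2 * d - 2 * c ^ 2 * (d + 1)) / (d + 1) ^ 2 := by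
      field_simp; ring
    rw [h4] at h2
    have h5 : 0 ≤ c ^ 2 * d - 2 * c ^ 2 * (d + 1) := by
      rcases div_nonneg_iff.mp h2 with ⟨h, _⟩ | ⟨_, hb⟩
      · exact h
      · nlinarith [sq_nonneg (d + 1)]
    nlinarith [sq_nonneg c]
  have hkey := key (T x)
  rw [martingale_sa_inner hT.isSelfAdjoint (T x) x, inner_self_eq_norm_sq] at hkey
  have : ‖T x‖ = 0 := by nlinarith [norm_nonneg (T x)]
  simpa using this

end MartingaleHelpers

/-- the martingale method. Given an increasing sequence of non-negative
Hamiltonians `H_n = ∑_{k=1}^n h_k` with kernel projections `G_n` (and `g_n` for `h_n`),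
and the resolution of the identity `E_0 = 1 - G_1`, `E_n = G_n - G_{n+1}`, `E_N = G_N`,
Assumptions (i)-(iii) imply the gap estimate
`⟨ψ, H_N ψ⟩ ≥ γ (1 - ε √(1+ℓ))² ‖ψ‖²` for every `ψ` with `G_N ψ = 0`. -/
theorem martingale_method
    {H : Type*} [NormedAddCommGroup H] [InnerProductSpace ℂ H] [CompleteSpace H]
    (N : ℕ) (hN : 1 ≤ N)
    -- the bounded non-negative self-adjoint operators `h_1, …, h_N`
    (h : ℕ → H →L[ℂ] H)
    (hpos : ∀ n, 1 ≤ n → n ≤ N → (h n).IsPositive)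
    -- `G n` is the orthogonal projection onto `ker H_n`, where `H_n = ∑_{k=1}^n h_k`
    (G : ℕ → H →L[ℂ] H)
    (hGproj : ∀ n ≤ N, IsSelfAdjoint (G n) ∧ G n ∘L G n = G n ∧
      ∀ ψ : H, G n ψ = ψ ↔ (∑ k ∈ Finset.Icc 1 n, h k) ψ = 0)
    -- `g n` is the orthogonal projection onto `ker h_n`
    (g : ℕ → H →L[ℂ] H)
    (hgproj : ∀ n, 1 ≤ n → n ≤ N → (IsSelfAdjoint (g n) ∧ g n ∘L g n = g n ∧
      ∀ ψ : H, g n ψ = ψ ↔ h n ψ = 0))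
    -- the resolution of the identity `E_n`
    (E : ℕ → H →L[ℂ] H)
    (hE0 : E 0 = 1 - G 1)
    (hEmid : ∀ n, 1 ≤ n → n ≤ N - 1 → E n = G n - G (n + 1))
    (hEN : E N = G N)
    -- Assumption (i)
    (γ : ℝ) (hγ : 0 < γ)
    (hass1 : ∀ n, 1 ≤ n → n ≤ N → (h n - γ • (1 - g n)).IsPositive)
    -- Assumption (ii)
    (ℓ : ℕ)
    (hass2 : ∀ n, n ≤ N - 1 → ∀ k, k ≤ N → (k < n - ℓ ∨ n < k) →
      E k ∘L g (n + 1) = g (n + 1) ∘L E k)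
    -- Assumption (iii)
    (ε : ℝ) (hε0 : 0 < ε) (hε1 : ε < 1 / Real.sqrt ((ℓ : ℝ) + 1))
    (hass3 : ∀ n, n ≤ N - 1 → ((ε ^ 2 : ℝ) • E n - E n ∘L g (n + 1) ∘L E n).IsPositive)
    -- the vector `ψ` orthogonal to the ground state space
    (ψ : H) (hψ : G N ψ = 0) :
    γ * (1 - ε * Real.sqrt (1 + (ℓ : ℝ))) ^ 2 * ‖ψ‖ ^ 2 ≤
      RCLike.re (@inner ℂ H _ ψ ((∑ k ∈ Finset.Icc 1 N, h k) ψ)) := by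
  classical
  have hGsa : ∀ n, n ≤ N → IsSelfAdjoint (G n) := fun n hn => (hGproj n hn).1
  have hGidem : ∀ n, n ≤ N → G n ∘L G n = G n := fun n hn => (hGproj n hn).2.1
  have hGiff : ∀ n, n ≤ N → ∀ x : H,
      G n x = x ↔ (∑ k ∈ Finset.Icc 1 n, h k) x = 0 := fun n hn => (hGproj n hn).2.2
  have hG0 : G 0 = 1 := by
    ext x
    have h0 : (∑ k ∈ Finset.Icc 1 0, h k) x = 0 := by simp
    simpa using (hGiff 0 (Nat.zero_le N) x).mpr h0
  -- each `h k` kills kernel vectors of `H_n` for `k ≤ n`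
  have hker : ∀ n, n ≤ N → ∀ x : H, (∑ k ∈ Finset.Icc 1 n, h k) x = 0 →
      ∀ k, 1 ≤ k → k ≤ n → h k x = 0 := by
    intro n hn x hx k hk1 hk2
    have hsum : ∑ j ∈ Finset.Icc 1 n, re ⟪x, h j x⟫_ℂ = 0 := by
      have h0 : ⟪x, (∑ k ∈ Finset.Icc 1 n, h k) x⟫_ℂ = 0 := by rw [hx]; simp
      calc ∑ j ∈ Finset.Icc 1 n, re ⟪x, h j x⟫_ℂ
          = re ⟪x, (∑ k ∈ Finset.Icc 1 n, h k) x⟫_ℂ := by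
            rw [ContinuousLinearMap.sum_apply, inner_sum, map_sum]
        _ = 0 := by rw [h0]; simp
    have hnonneg : ∀ j ∈ Finset.Icc 1 n, 0 ≤ re ⟪x, h j x⟫_ℂ := by
      intro j hj
      simp only [Finset.mem_Icc] at hj
      exact (hpos j hj.1 (le_trans hj.2 hn)).re_inner_nonneg_right x
    have hz := (Finset.sum_eq_zero_iff_of_nonneg hnonneg).mp hsum k
      (Finset.mem_Icc.mpr ⟨hk1, hk2⟩)
    exact martingale_pos_inner_zero (hpos k hk1 (le_trans hk2 hn)) hz
  have hGkerx : ∀ n, n ≤ N → ∀ x : H, (∑ k ∈ Finset.Icc 1 n, h k) (G n x) = 0 := by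
    intro n hn x
    have h1 : G n (G n x) = G n x := by
      have := ContinuousLinearMap.ext_iff.mp (hGidem n hn) x
      simpa using this
    exact (hGiff n hn _).mp h1
  have hGGop : ∀ n m, n ≤ m → m ≤ N → G n ∘L G m = G m := by
    intro n m hnm hm
    ext x
    have h0 : (∑ k ∈ Finset.Icc 1 n, h k) (G m x) = 0 := by
      rw [ContinuousLinearMap.sum_apply]
      apply Finset.sum_eq_zero
      intro k hk
      simp only [Finset.mem_Icc] at hk
      exact hker m hm (G m x) (hGkerx m hm x) k hk.1 (le_trans hk.2 hnm)
    simpa using (hGiff n (le_trans hnm hm) _).mpr h0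
  have hGGop' : ∀ n m, n ≤ m → m ≤ N → G m ∘L G n = G m := by
    intro n m hnm hm
    have h1 := congrArg ContinuousLinearMap.adjoint (hGGop n m hnm hm)
    rwa [ContinuousLinearMap.adjoint_comp, (hGsa n (le_trans hnm hm)).adjoint_eq,
      (hGsa m hm).adjoint_eq] at h1
  -- uniform description of `E n` for `n < N`
  have hEeq : ∀ n, n < N → E n = G n - G (n + 1) := by
    intro n hn
    rcases Nat.eq_zero_or_pos n with rfl | hn1
    · rw [hE0, hG0]
    · exact hEmid n hn1 (by omega)
  have hEsa : ∀ n, n < N → IsSelfAdjoint (E n) := by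
    intro n hn
    rw [hEeq n hn]
    exact ((hGsa n (by omega)).sub (hGsa (n + 1) (by omega)))
  have hEcomp : ∀ k n, k < N → n < N → E k ∘L E n = if k = n then E n else 0 := by
    intro k n hk hn
    rw [hEeq k hk, hEeq n hn, ContinuousLinearMap.sub_comp,
      ContinuousLinearMap.comp_sub, ContinuousLinearMap.comp_sub]
    rcases lt_trichotomy k n with hlt | heq | hgt
    · rw [hGGop k n (by omega) (by omega), hGGop k (n + 1) (by omega) (by omega),
        hGGop (k + 1) n (by omega) (by omega), hGGop (k + 1) (n + 1) (by omega) (by omega),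
        if_neg (Nat.ne_of_lt hlt)]
      abel
    · subst heq
      rw [hGGop k k le_rfl (by omega), hGGop k (k + 1) (by omega) (by omega),
        hGGop' k (k + 1) (by omega) (by omega), hGGop (k + 1) (k + 1) le_rfl (by omega),
        if_pos rfl]
      abel
    · rw [hGGop' n k (by omega) (by omega), hGGop' (n + 1) k (by omega) (by omega),
        hGGop' n (k + 1) (by omega) (by omega), hGGop' (n + 1) (k + 1) (by omega) (by omega),
        if_neg (Nat.ne_of_gt hgt)]
      abel
  -- decomposition of ψ
  have hEdecomp : ∑ n ∈ Finset.range N, E n ψ = ψ := by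
    have hc : ∀ n ∈ Finset.range N, E n ψ = G n ψ - G (n + 1) ψ := by
      intro n hn
      rw [hEeq n (Finset.mem_range.mp hn)]
      simp
    rw [Finset.sum_congr rfl hc, Finset.sum_range_sub' (fun n => G n ψ), hψ, hG0]
    simp
  set a : ℕ → ℝ := fun n => ‖E n ψ‖ with ha
  set S : ℝ := ∑ n ∈ Finset.range N, a n ^ 2 with hSdef
  have hEinner : ∀ n, n < N → re ⟪ψ, E n ψ⟫_ℂ = a n ^ 2 := by
    intro n hn
    have h1 : E n (E n ψ) = E n ψ := by
      have := ContinuousLinearMap.ext_iff.mp (hEcomp n n hn hn) ψ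
      simpa using this
    calc re ⟪ψ, E n ψ⟫_ℂ = re ⟪ψ, E n (E n ψ)⟫_ℂ := by rw [h1]
      _ = re ⟪E n ψ, E n ψ⟫_ℂ := by rw [← martingale_sa_inner (hEsa n hn) ψ (E n ψ)]
      _ = a n ^ 2 := inner_self_eq_norm_sq _
  have hEorth : ∀ k n, k < N → n < N → k ≠ n → ⟪E k ψ, E n ψ⟫_ℂ = 0 := by
    intro k n hk hn hkn
    have h1 : E k (E n ψ) = 0 := by
      have := ContinuousLinearMap.ext_iff.mp (hEcomp k n hk hn) ψ
      simpa [hkn] using this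
    rw [martingale_sa_inner (hEsa k hk) ψ (E n ψ), h1, inner_zero_right]
  have hpyth : ∀ T : Finset ℕ, (∀ k ∈ T, k < N) →
      ‖∑ k ∈ T, E k ψ‖ ^ 2 = ∑ k ∈ T, a k ^ 2 := by
    intro T hT
    rw [← inner_self_eq_norm_sq (𝕜 := ℂ), sum_inner, map_sum]
    apply Finset.sum_congr rfl
    intro k hk
    rw [inner_sum]
    rw [Finset.sum_eq_single_of_mem k hk (fun j hj hjk =>
      hEorth k j (hT k hk) (hT j hj) (Ne.symm hjk))]
    exact inner_self_eq_norm_sq _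
  have hSnorm : ‖ψ‖ ^ 2 = S := by
    have hp := hpyth (Finset.range N) (fun k hk => Finset.mem_range.mp hk)
    rw [hEdecomp] at hp
    exact hp
  have hS0 : 0 ≤ S := by
    rw [← hSnorm]; positivity
  -- projections g
  have hgsa : ∀ n, n < N → IsSelfAdjoint (g (n + 1)) :=
    fun n hn => (hgproj (n + 1) (by omega) (by omega)).1
  have hgidem : ∀ n, n < N → ∀ x : H, g (n + 1) (g (n + 1) x) = g (n + 1) x := by
    intro n hn x
    have := ContinuousLinearMap.ext_iff.mp (hgproj (n + 1) (by omega) (by omega)).2.1 x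
    simpa using this
  set b : ℕ → ℝ := fun n => ‖ψ - g (n + 1) ψ‖ with hb
  have hbsq : ∀ n, n < N → b n ^ 2 = re ⟪ψ, ψ - g (n + 1) ψ⟫_ℂ := by
    intro n hn
    have h1 : ⟪ψ - g (n + 1) ψ, ψ - g (n + 1) ψ⟫_ℂ = ⟪ψ, ψ - g (n + 1) ψ⟫_ℂ := by
      rw [inner_sub_left]
      have h2 : ⟪g (n + 1) ψ, ψ - g (n + 1) ψ⟫_ℂ = 0 := by
        rw [martingale_sa_inner (hgsa n hn) ψ (ψ - g (n + 1) ψ), map_sub,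
          hgidem n hn ψ, sub_self, inner_zero_right]
      rw [h2, sub_zero]
    rw [← inner_self_eq_norm_sq (𝕜 := ℂ), h1]
  -- the energy
  set D : ℝ := re ⟪ψ, (∑ k ∈ Finset.Icc 1 N, h k) ψ⟫_ℂ with hD
  have hDsum : D = ∑ n ∈ Finset.range N, re ⟪ψ, h (n + 1) ψ⟫_ℂ := by
    rw [hD, ContinuousLinearMap.sum_apply, inner_sum, map_sum, ← Finset.Ico_add_one_right_eq_Icc,
      Finset.sum_Ico_eq_sum_range]
    simp [Nat.add_comm]
  have hD0 : 0 ≤ D := by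
    rw [hDsum]
    exact Finset.sum_nonneg fun n hn =>
      (hpos (n + 1) (by omega) (Finset.mem_range.mp hn)).re_inner_nonneg_right ψ
  -- Step D : ∑ b² ≤ D / γ
  have hstepD : ∑ n ∈ Finset.range N, b n ^ 2 ≤ D / γ := by
    have key : ∀ n ∈ Finset.range N, γ * b n ^ 2 ≤ re ⟪ψ, h (n + 1) ψ⟫_ℂ := by
      intro n hn
      have hn' := Finset.mem_range.mp hn
      have hp := (hass1 (n + 1) (by omega) hn').re_inner_nonneg_right ψ
      have expand : re ⟪ψ, (h (n + 1) - γ • (1 - g (n + 1))) ψ⟫_ℂ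
          = re ⟪ψ, h (n + 1) ψ⟫_ℂ - γ * re ⟪ψ, ψ - g (n + 1) ψ⟫_ℂ := by
        simp only [ContinuousLinearMap.sub_apply, ContinuousLinearMap.smul_apply,
          ContinuousLinearMap.one_apply, inner_sub_right, map_sub,
          martingale_re_inner_smul_right]
      rw [expand] at hp
      rw [hbsq n hn']
      linarith
    have hsum : γ * ∑ n ∈ Finset.range N, b n ^ 2 ≤ D := by
      rw [hDsum, Finset.mul_sum]
      exact Finset.sum_le_sum key
    rw [le_div_iff₀ hγ]
    linarith
  -- Step E : ∑ c2 ≤ (1+ℓ) S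
  have hc2nonneg : ∀ n : ℕ, (0:ℝ) ≤ ∑ k ∈ Finset.Icc (n - ℓ) n, a k ^ 2 :=
    fun n => Finset.sum_nonneg fun k _ => sq_nonneg _
  have hstepE : ∑ n ∈ Finset.range N, (∑ k ∈ Finset.Icc (n - ℓ) n, a k ^ 2)
      ≤ (1 + (ℓ : ℝ)) * S := by
    have h1 : ∀ n ∈ Finset.range N, (∑ k ∈ Finset.Icc (n - ℓ) n, a k ^ 2)
        = ∑ k ∈ Finset.range N, if k ∈ Finset.Icc (n - ℓ) n then a k ^ 2 else 0 := by
      intro n hn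
      have hnN := Finset.mem_range.mp hn
      have hsubset : Finset.Icc (n - ℓ) n ⊆ Finset.range N := by
        intro k hk
        simp only [Finset.mem_Icc] at hk
        exact Finset.mem_range.mpr (by omega)
      rw [Finset.sum_ite_mem, Finset.inter_eq_right.mpr hsubset]
    rw [Finset.sum_congr rfl h1, Finset.sum_comm, hSdef, Finset.mul_sum]
    apply Finset.sum_le_sum
    intro k _
    have h2 : ∀ n : ℕ, (k ∈ Finset.Icc (n - ℓ) n) ↔ (n ∈ Finset.Icc k (k + ℓ)) := by
      intro n; simp only [Finset.mem_Icc]; omega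
    calc ∑ n ∈ Finset.range N, (if k ∈ Finset.Icc (n - ℓ) n then a k ^ 2 else 0)
        = ∑ n ∈ Finset.range N, (if n ∈ Finset.Icc k (k + ℓ) then a k ^ 2 else 0) := by
          exact Finset.sum_congr rfl fun n _ => by simp only [h2]
      _ = ∑ n ∈ Finset.range N ∩ Finset.Icc k (k + ℓ), a k ^ 2 :=
          Finset.sum_ite_mem _ _ _
      _ ≤ (1 + (ℓ : ℝ)) * a k ^ 2 := by
          rw [Finset.sum_const, nsmul_eq_mul]
          have hcard : (Finset.range N ∩ Finset.Icc k (k + ℓ)).card ≤ ℓ + 1 := by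
            calc (Finset.range N ∩ Finset.Icc k (k + ℓ)).card
                ≤ (Finset.Icc k (k + ℓ)).card := Finset.card_le_card Finset.inter_subset_right
              _ = ℓ + 1 := by rw [Nat.card_Icc]; omega
          have hk2 : (0 : ℝ) ≤ a k ^ 2 := sq_nonneg _
          have hcard' : ((Finset.range N ∩ Finset.Icc k (k + ℓ)).card : ℝ) ≤ 1 + (ℓ : ℝ) := by
            have : ((Finset.range N ∩ Finset.Icc k (k + ℓ)).card : ℝ) ≤ ((ℓ + 1 : ℕ) : ℝ) := by
              exact_mod_cast hcard
            push_cast at this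
            linarith
          exact mul_le_mul_of_nonneg_right hcard' hk2
  -- Step A : per-site estimate
  have hstepA : ∀ n, n < N → a n ^ 2 ≤ b n * a n
      + ε * (Real.sqrt (∑ k ∈ Finset.Icc (n - ℓ) n, a k ^ 2) * a n) := by
    intro n hn
    have hn1 : n ≤ N - 1 := by omega
    have hgn_sa := hgsa n hn
    -- bound on ‖g (E n ψ)‖
    have hgu : ‖g (n + 1) (E n ψ)‖ ≤ ε * a n := by
      have hp := (hass3 n hn1).re_inner_nonneg_right ψ
      have e1 : re ⟪ψ, ((ε ^ 2 : ℝ) • E n) ψ⟫_ℂ = ε ^ 2 * a n ^ 2 := by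
        rw [ContinuousLinearMap.smul_apply, martingale_re_inner_smul_right, hEinner n hn]
      have e2 : ⟪g (n + 1) (E n ψ), g (n + 1) (E n ψ)⟫_ℂ
          = ⟪ψ, (E n ∘L g (n + 1) ∘L E n) ψ⟫_ℂ := by
        calc ⟪g (n + 1) (E n ψ), g (n + 1) (E n ψ)⟫_ℂ
            = ⟪E n ψ, g (n + 1) (g (n + 1) (E n ψ))⟫_ℂ :=
              martingale_sa_inner hgn_sa (E n ψ) (g (n + 1) (E n ψ))
          _ = ⟪E n ψ, g (n + 1) (E n ψ)⟫_ℂ := by rw [hgidem n hn]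
          _ = ⟪ψ, E n (g (n + 1) (E n ψ))⟫_ℂ :=
              martingale_sa_inner (hEsa n hn) ψ (g (n + 1) (E n ψ))
          _ = ⟪ψ, (E n ∘L g (n + 1) ∘L E n) ψ⟫_ℂ := by
              simp only [ContinuousLinearMap.comp_apply]
      rw [ContinuousLinearMap.sub_apply, inner_sub_right, map_sub, e1, ← e2,
        inner_self_eq_norm_sq] at hp
      have hnorm2 : ‖g (n + 1) (E n ψ)‖ ^ 2 ≤ (ε * a n) ^ 2 := by nlinarith [hp]
      have h1 : ‖g (n + 1) (E n ψ)‖ = Real.sqrt (‖g (n + 1) (E n ψ)‖ ^ 2) :=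
        (Real.sqrt_sq (norm_nonneg _)).symm
      have h2 : Real.sqrt ((ε * a n) ^ 2) = ε * a n :=
        Real.sqrt_sq (by positivity)
      rw [h1, ← h2]
      exact Real.sqrt_le_sqrt hnorm2
    -- term 1
    have hterm1 : re ⟪ψ - g (n + 1) ψ, E n ψ⟫_ℂ ≤ b n * a n :=
      calc re ⟪ψ - g (n + 1) ψ, E n ψ⟫_ℂ ≤ ‖⟪ψ - g (n + 1) ψ, E n ψ⟫_ℂ‖ := re_le_norm _
        _ ≤ b n * a n := norm_inner_le_norm _ _
    -- term 2
    have hterm2 : re ⟪ψ, g (n + 1) (E n ψ)⟫_ℂ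
        ≤ Real.sqrt (∑ k ∈ Finset.Icc (n - ℓ) n, a k ^ 2) * (ε * a n) := by
      have hvanish : ∀ k ∈ Finset.range N, k ∉ Finset.Icc (n - ℓ) n →
          ⟪E k ψ, g (n + 1) (E n ψ)⟫_ℂ = 0 := by
        intro k hkN hknot
        have hkN' := Finset.mem_range.mp hkN
        have hk' : k < n - ℓ ∨ n < k := by
          simp only [Finset.mem_Icc, not_and_or, not_le] at hknot
          omega
        have hcomm := hass2 n hn1 k (by omega : k ≤ N) hk'
        have hkn : k ≠ n := by rcases hk' with h' | h' <;> omega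
        have hEk0 : E k (E n ψ) = 0 := by
          have := ContinuousLinearMap.ext_iff.mp (hEcomp k n hkN' hn) ψ
          simpa [hkn] using this
        calc ⟪E k ψ, g (n + 1) (E n ψ)⟫_ℂ
            = ⟪ψ, E k (g (n + 1) (E n ψ))⟫_ℂ :=
              martingale_sa_inner (hEsa k hkN') ψ _
          _ = ⟪ψ, g (n + 1) (E k (E n ψ))⟫_ℂ := by
              have hc := ContinuousLinearMap.ext_iff.mp hcomm (E n ψ)
              simp only [ContinuousLinearMap.comp_apply] at hc
              rw [hc]
          _ = 0 := by rw [hEk0, map_zero, inner_zero_right]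
      have hsubset : Finset.Icc (n - ℓ) n ⊆ Finset.range N := by
        intro k hk
        simp only [Finset.mem_Icc] at hk
        exact Finset.mem_range.mpr (by omega)
      have hsum : ⟪ψ, g (n + 1) (E n ψ)⟫_ℂ
          = ⟪∑ k ∈ Finset.Icc (n - ℓ) n, E k ψ, g (n + 1) (E n ψ)⟫_ℂ := by
        calc ⟪ψ, g (n + 1) (E n ψ)⟫_ℂ
            = ⟪∑ k ∈ Finset.range N, E k ψ, g (n + 1) (E n ψ)⟫_ℂ := by rw [hEdecomp]
          _ = ∑ k ∈ Finset.range N, ⟪E k ψ, g (n + 1) (E n ψ)⟫_ℂ := sum_inner _ _ _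
          _ = ∑ k ∈ Finset.Icc (n - ℓ) n, ⟪E k ψ, g (n + 1) (E n ψ)⟫_ℂ :=
              (Finset.sum_subset hsubset (fun k hk hk' => hvanish k hk hk')).symm
          _ = ⟪∑ k ∈ Finset.Icc (n - ℓ) n, E k ψ, g (n + 1) (E n ψ)⟫_ℂ :=
              (sum_inner _ _ _).symm
      have hnormP : ‖∑ k ∈ Finset.Icc (n - ℓ) n, E k ψ‖
          = Real.sqrt (∑ k ∈ Finset.Icc (n - ℓ) n, a k ^ 2) := by
        have hp := hpyth (Finset.Icc (n - ℓ) n) (fun k hk => by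
          simp only [Finset.mem_Icc] at hk; omega)
        rw [← Real.sqrt_sq (norm_nonneg (∑ k ∈ Finset.Icc (n - ℓ) n, E k ψ)), hp]
      calc re ⟪ψ, g (n + 1) (E n ψ)⟫_ℂ
          = re ⟪∑ k ∈ Finset.Icc (n - ℓ) n, E k ψ, g (n + 1) (E n ψ)⟫_ℂ := by rw [hsum]
        _ ≤ ‖⟪∑ k ∈ Finset.Icc (n - ℓ) n, E k ψ, g (n + 1) (E n ψ)⟫_ℂ‖ := re_le_norm _
        _ ≤ ‖∑ k ∈ Finset.Icc (n - ℓ) n, E k ψ‖ * ‖g (n + 1) (E n ψ)‖ :=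
            norm_inner_le_norm _ _
        _ ≤ Real.sqrt (∑ k ∈ Finset.Icc (n - ℓ) n, a k ^ 2) * (ε * a n) := by
            rw [hnormP]
            exact mul_le_mul_of_nonneg_left hgu (Real.sqrt_nonneg _)
    -- combine
    have hsplit : re ⟪ψ, E n ψ⟫_ℂ
        = re ⟪ψ - g (n + 1) ψ, E n ψ⟫_ℂ + re ⟪ψ, g (n + 1) (E n ψ)⟫_ℂ := by
      rw [inner_sub_left, map_sub, martingale_sa_inner hgn_sa ψ (E n ψ)]
      ring
    rw [← hEinner n hn, hsplit]
    linarith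
  -- Cauchy-Schwarz sums
  have hCS1 : ∑ n ∈ Finset.range N, b n * a n ≤ Real.sqrt (D / γ) * ‖ψ‖ := by
    calc ∑ n ∈ Finset.range N, b n * a n
        ≤ Real.sqrt (∑ n ∈ Finset.range N, b n ^ 2) *
            Real.sqrt (∑ n ∈ Finset.range N, a n ^ 2) :=
          Real.sum_mul_le_sqrt_mul_sqrt _ _ _
      _ ≤ Real.sqrt (D / γ) * ‖ψ‖ := by
          have h2 : Real.sqrt (∑ n ∈ Finset.range N, a n ^ 2) = ‖ψ‖ := by
            rw [← hSdef, ← hSnorm, Real.sqrt_sq (norm_nonneg ψ)]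
          rw [h2]
          exact mul_le_mul_of_nonneg_right (Real.sqrt_le_sqrt hstepD) (norm_nonneg ψ)
  have hCS2 : ∑ n ∈ Finset.range N,
        Real.sqrt (∑ k ∈ Finset.Icc (n - ℓ) n, a k ^ 2) * a n
      ≤ Real.sqrt (1 + (ℓ : ℝ)) * S := by
    calc ∑ n ∈ Finset.range N, Real.sqrt (∑ k ∈ Finset.Icc (n - ℓ) n, a k ^ 2) * a n
        ≤ Real.sqrt (∑ n ∈ Finset.range N,
              Real.sqrt (∑ k ∈ Finset.Icc (n - ℓ) n, a k ^ 2) ^ 2) *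
            Real.sqrt (∑ n ∈ Finset.range N, a n ^ 2) :=
          Real.sum_mul_le_sqrt_mul_sqrt _ _ _
      _ = Real.sqrt (∑ n ∈ Finset.range N, ∑ k ∈ Finset.Icc (n - ℓ) n, a k ^ 2) * ‖ψ‖ := by
          congr 1
          · congr 1
            exact Finset.sum_congr rfl fun n _ => Real.sq_sqrt (hc2nonneg n)
          · rw [← hSdef, ← hSnorm, Real.sqrt_sq (norm_nonneg ψ)]
      _ ≤ Real.sqrt ((1 + (ℓ : ℝ)) * S) * ‖ψ‖ :=
          mul_le_mul_of_nonneg_right (Real.sqrt_le_sqrt hstepE) (norm_nonneg ψ)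
      _ = Real.sqrt (1 + (ℓ : ℝ)) * S := by
          rw [← hSnorm, Real.sqrt_mul (by positivity : (0:ℝ) ≤ 1 + (ℓ : ℝ)),
            Real.sqrt_sq (norm_nonneg ψ)]
          ring
  -- main inequality
  have hmain : S ≤ Real.sqrt (D / γ) * ‖ψ‖ + ε * (Real.sqrt (1 + (ℓ : ℝ)) * S) := by
    have h1 : S ≤ ∑ n ∈ Finset.range N, (b n * a n
        + ε * (Real.sqrt (∑ k ∈ Finset.Icc (n - ℓ) n, a k ^ 2) * a n)) := by
      rw [hSdef]
      exact Finset.sum_le_sum fun n hn => hstepA n (Finset.mem_range.mp hn)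
    rw [Finset.sum_add_distrib, ← Finset.mul_sum] at h1
    have h2 : ε * ∑ n ∈ Finset.range N,
          Real.sqrt (∑ k ∈ Finset.Icc (n - ℓ) n, a k ^ 2) * a n
        ≤ ε * (Real.sqrt (1 + (ℓ : ℝ)) * S) :=
      mul_le_mul_of_nonneg_left hCS2 (le_of_lt hε0)
    linarith
  -- conclusion
  have hsqrtpos : 0 < Real.sqrt (1 + (ℓ : ℝ)) := Real.sqrt_pos.mpr (by positivity)
  have hβ1 : ε * Real.sqrt (1 + (ℓ : ℝ)) < 1 := by
    have := mul_lt_mul_of_pos_right hε1 hsqrtpos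
    rw [div_mul_eq_mul_div, one_mul] at this
    have heq : Real.sqrt ((ℓ : ℝ) + 1) = Real.sqrt (1 + (ℓ : ℝ)) := by rw [add_comm]
    rw [heq, div_self (ne_of_gt hsqrtpos)] at this
    exact this
  by_cases hψ0 : ‖ψ‖ = 0
  · rw [hψ0]
    simpa using hD0
  · have hψpos : 0 < ‖ψ‖ := lt_of_le_of_ne (norm_nonneg ψ) (Ne.symm hψ0)
    have h3 : (1 - ε * Real.sqrt (1 + (ℓ : ℝ))) * ‖ψ‖ ≤ Real.sqrt (D / γ) := by
      have h4 : (1 - ε * Real.sqrt (1 + (ℓ : ℝ))) * S ≤ Real.sqrt (D / γ) * ‖ψ‖ := by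
        linarith [hmain]
      rw [← hSnorm] at h4
      have h4' : (1 - ε * Real.sqrt (1 + (ℓ : ℝ))) * ‖ψ‖ * ‖ψ‖
          ≤ Real.sqrt (D / γ) * ‖ψ‖ := by
        calc (1 - ε * Real.sqrt (1 + (ℓ : ℝ))) * ‖ψ‖ * ‖ψ‖
            = (1 - ε * Real.sqrt (1 + (ℓ : ℝ))) * ‖ψ‖ ^ 2 := by ring
          _ ≤ Real.sqrt (D / γ) * ‖ψ‖ := h4
      exact le_of_mul_le_mul_right h4' hψpos
    have h5 : ((1 - ε * Real.sqrt (1 + (ℓ : ℝ))) * ‖ψ‖) ^ 2 ≤ Real.sqrt (D / γ) ^ 2 :=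
      pow_le_pow_left₀ (mul_nonneg (by linarith) (norm_nonneg ψ)) h3 2
    rw [Real.sq_sqrt (by positivity : (0 : ℝ) ≤ D / γ)] at h5
    have h6 : (1 - ε * Real.sqrt (1 + (ℓ : ℝ))) ^ 2 * ‖ψ‖ ^ 2 ≤ D / γ := by
      calc (1 - ε * Real.sqrt (1 + (ℓ : ℝ))) ^ 2 * ‖ψ‖ ^ 2
          = ((1 - ε * Real.sqrt (1 + (ℓ : ℝ))) * ‖ψ‖) ^ 2 := by ring
        _ ≤ D / γ := h5
    calc γ * (1 - ε * Real.sqrt (1 + (ℓ : ℝ))) ^ 2 * ‖ψ‖ ^ 2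
        = γ * ((1 - ε * Real.sqrt (1 + (ℓ : ℝ))) ^ 2 * ‖ψ‖ ^ 2) := by ring
      _ ≤ γ * (D / γ) := mul_le_mul_of_nonneg_left h6 (le_of_lt hγ)
      _ = D := by field_simp
end

section
/- Let X, Y be finite disjoint subsets of Γ. If A ∈ 𝔄_X⁺ and B ∈ 𝔄_Y, then [A,B] = 0. Conversely, assuming the monomials supported in X ∪ Y are linearly independent in 𝔄: if A ∈ 𝔄_X, B ∈ 𝔄_Y and [A,B] = 0, then A ∈ 𝔄_X⁺ or B ∈ 𝔄_Y⁺. -/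
open scoped Classical

/-- The canonical anticommutation relations for a family `a x` of annihilation
operators in a C*-algebra. -/
def IsCAR {Γ A : Type*} [Ring A] [StarRing A] (a : Γ → A) : Prop :=
  (∀ x y, a x * a y + a y * a x = 0) ∧
  (∀ x y, star (a x) * star (a y) + star (a y) * star (a x) = 0) ∧
  (∀ x y, a x * star (a y) + star (a y) * a x = if x = y then (1 : A) else 0)

/-- The four possible factors of a monomial at a site `x`:
`1`, `a x`, `a x *`, and `a x * a x`. -/
def carFactor {Γ A : Type*} [Ring A] [StarRing A] (a : Γ → A) (k : Fin 4) (x : Γ) : A :=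
  match k with
  | 0 => 1
  | 1 => a x
  | 2 => star (a x)
  | 3 => star (a x) * a x

/-- The monomial with factor pattern `k` along the enumeration `l` of a finite set of sites. -/
def carMonomial {Γ A : Type*} [Ring A] [StarRing A] (a : Γ → A) (l : List Γ)
    (k : Γ → Fin 4) : A :=
  (l.map fun x => carFactor a (k x) x).prod

/-- The number of odd factors (`a x` or `a x *`) of the monomial with pattern `k` along `l`. -/
def carOddCount {Γ : Type*} (l : List Γ) (k : Γ → Fin 4) : ℕ :=
  l.countP fun x => decide (k x = 1 ∨ k x = 2)

/-- `𝔄_X`: the linear span of the monomials supported in the finite set `X`. -/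
def carSpan {Γ A : Type*} [Ring A] [StarRing A] [Algebra ℂ A] (a : Γ → A) (X : Finset Γ) :
    Submodule ℂ A :=
  Submodule.span ℂ {m | ∃ (l : List Γ) (k : Γ → Fin 4),
    l.Nodup ∧ l.toFinset = X ∧ m = carMonomial a l k}

/-- `𝔄_X⁺`: the linear span of the even monomials supported in the finite set `X`. -/
def carSpanEven {Γ A : Type*} [Ring A] [StarRing A] [Algebra ℂ A] (a : Γ → A) (X : Finset Γ) :
    Submodule ℂ A :=
  Submodule.span ℂ {m | ∃ (l : List Γ) (k : Γ → Fin 4),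
    l.Nodup ∧ l.toFinset = X ∧ Even (carOddCount l k) ∧ m = carMonomial a l k}

section Dev
variable {Γ A : Type*} [Ring A] [StarRing A] {a : Γ → A}

def carOdd (k : Fin 4) : ℕ := if k = 1 ∨ k = 2 then 1 else 0

lemma carOddCount_nil (k : Γ → Fin 4) : carOddCount ([] : List Γ) k = 0 := rfl

lemma carOddCount_cons (x : Γ) (t : List Γ) (k : Γ → Fin 4) :
    carOddCount (x :: t) k = carOdd (k x) + carOddCount t k := by
  simp only [carOddCount, List.countP_cons, carOdd]
  split <;> simp_all <;> omega

lemma carMonomial_nil (k : Γ → Fin 4) : carMonomial a ([] : List Γ) k = 1 := rfl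

lemma carMonomial_cons (x : Γ) (t : List Γ) (k : Γ → Fin 4) :
    carMonomial a (x :: t) k = carFactor a (k x) x * carMonomial a t k := by
  simp [carMonomial]

lemma carMonomial_append (l₁ l₂ : List Γ) (k : Γ → Fin 4) :
    carMonomial a (l₁ ++ l₂) k = carMonomial a l₁ k * carMonomial a l₂ k := by
  simp [carMonomial]

lemma carMonomial_congr {l : List Γ} {k k' : Γ → Fin 4} (h : ∀ x ∈ l, k x = k' x) :
    carMonomial a l k = carMonomial a l k' := by
  unfold carMonomial
  congr 1
  exact List.map_congr_left fun x hx => by rw [h x hx]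

lemma carOddCount_congr {l : List Γ} {k k' : Γ → Fin 4} (h : ∀ x ∈ l, k x = k' x) :
    carOddCount l k = carOddCount l k' := by
  unfold carOddCount
  exact List.countP_congr fun x hx => by rw [h x hx]

lemma gen_swap (h : IsCAR a) {x y : Γ} (hxy : x ≠ y) :
    (a x * a y = -(a y * a x)) ∧ (star (a x) * star (a y) = -(star (a y) * star (a x))) ∧
    (a x * star (a y) = -(star (a y) * a x)) ∧ (star (a x) * a y = -(a y * star (a x))) := by
  obtain ⟨h1, h2, h3⟩ := h
  refine ⟨eq_neg_of_add_eq_zero_left (h1 x y), eq_neg_of_add_eq_zero_left (h2 x y),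
    eq_neg_of_add_eq_zero_left (by rw [h3 x y, if_neg hxy]),
    eq_neg_of_add_eq_zero_right (by rw [h3 y x, if_neg hxy.symm])⟩

lemma anticomm_mul {g u v : A} (hu : g * u = -(u * g)) (hv : g * v = -(v * g)) :
    g * (u * v) = (u * v) * g := by
  calc g * (u * v) = (g * u) * v := by rw [mul_assoc]
    _ = -(u * (g * v)) := by rw [hu]; noncomm_ring
    _ = -(u * (-(v * g))) := by rw [hv]
    _ = (u * v) * g := by noncomm_ring

lemma comm_mul {g u v : A} (hu : u * g = g * u) (hv : v * g = g * v) :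
    (u * v) * g = g * (u * v) := by
  rw [mul_assoc, hv, ← mul_assoc, hu, mul_assoc]

lemma factor_swap (h : IsCAR a) {x y : Γ} (hxy : x ≠ y) (kx ky : Fin 4) :
    carFactor a kx x * carFactor a ky y =
      ((-1 : ℤ) ^ (carOdd kx * carOdd ky)) • (carFactor a ky y * carFactor a kx x) := by
  obtain ⟨e1, e2, e3, e4⟩ := gen_swap h hxy
  obtain ⟨f1, f2, f3, f4⟩ := gen_swap h hxy.symm
  have cx1 : a x * (star (a y) * a y) = (star (a y) * a y) * a x := anticomm_mul e3 e1
  have cx2 : star (a x) * (star (a y) * a y) = (star (a y) * a y) * star (a x) :=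
    anticomm_mul e2 e4
  have cy1 : a y * (star (a x) * a x) = (star (a x) * a x) * a y := anticomm_mul f3 f1
  have cy2 : star (a y) * (star (a x) * a x) = (star (a x) * a x) * star (a y) :=
    anticomm_mul f2 f4
  have hfin := (by decide : ∀ k : Fin 4, k = 0 ∨ k = 1 ∨ k = 2 ∨ k = 3)
  have c0 : carOdd 0 = 0 := by decide
  have c1 : carOdd 1 = 1 := by decide
  have c2 : carOdd 2 = 1 := by decide
  have c3 : carOdd 3 = 0 := by decide
  rcases hfin kx with rfl | rfl | rfl | rfl <;> rcases hfin ky with rfl | rfl | rfl | rfl <;>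
    simp only [carFactor, c0, c1, c2, c3, Nat.mul_zero, Nat.zero_mul, Nat.mul_one, pow_zero,
      pow_one, one_smul, neg_one_zsmul, one_mul, mul_one] <;>
    first
      | rfl
      | exact e1 | exact e2 | exact e3 | exact e4
      | exact cx1 | exact cx2 | exact cy1.symm | exact cy2.symm
      | exact comm_mul cx2 cx1
end Dev

section Dev2
variable {Γ A : Type*} [Ring A] [StarRing A] {a : Γ → A}

lemma factor_monomial_swap (h : IsCAR a) {y : Γ} {l : List Γ} (hy : y ∉ l)
    (ky : Fin 4) (k : Γ → Fin 4) :
    carFactor a ky y * carMonomial a l k =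
      ((-1 : ℤ) ^ (carOdd ky * carOddCount l k)) • (carMonomial a l k * carFactor a ky y) := by
  induction l with
  | nil => simp [carMonomial_nil, carOddCount_nil]
  | cons x t ih =>
    have hyx : y ≠ x := fun e => hy (e ▸ (List.mem_cons_self : x ∈ x :: t))
    have hyt : y ∉ t := fun e => hy (List.mem_cons_of_mem x e)
    rw [carMonomial_cons, carOddCount_cons, ← mul_assoc, factor_swap h hyx,
      smul_mul_assoc, mul_assoc, ih hyt, mul_smul_comm, smul_smul, ← pow_add,
      Nat.mul_add, ← mul_assoc]

lemma monomial_swap (h : IsCAR a) {l₁ l₂ : List Γ} (hd : ∀ x ∈ l₁, x ∉ l₂)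
    (k₁ k₂ : Γ → Fin 4) :
    carMonomial a l₁ k₁ * carMonomial a l₂ k₂ =
      ((-1 : ℤ) ^ (carOddCount l₁ k₁ * carOddCount l₂ k₂)) •
        (carMonomial a l₂ k₂ * carMonomial a l₁ k₁) := by
  induction l₁ with
  | nil => simp [carMonomial_nil, carOddCount_nil]
  | cons x t ih =>
    have hx : x ∉ l₂ := hd x ((List.mem_cons_self : x ∈ x :: t))
    have ht : ∀ z ∈ t, z ∉ l₂ := fun z hz => hd z (List.mem_cons_of_mem x hz)
    rw [carMonomial_cons, carOddCount_cons, mul_assoc, ih ht, mul_smul_comm,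
      ← mul_assoc, factor_monomial_swap h hx, smul_mul_assoc, smul_smul, ← pow_add,
      Nat.add_mul, mul_assoc, Nat.add_comm]

lemma monomial_perm (h : IsCAR a) (k : Γ → Fin 4) {l l' : List Γ} (hp : l.Perm l')
    (hn : l.Nodup) :
    ∃ n : ℕ, carMonomial a l k = ((-1 : ℤ) ^ n) • carMonomial a l' k := by
  induction hp with
  | nil => exact ⟨0, by simp⟩
  | cons x hp' ih =>
    have hn' := hn
    rw [List.nodup_cons] at hn'
    obtain ⟨n, e⟩ := ih hn'.2
    exact ⟨n, by rw [carMonomial_cons, carMonomial_cons, e, mul_smul_comm]⟩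
  | swap x y t =>
    have hyx : y ≠ x := by
      rw [List.nodup_cons] at hn
      exact fun e => hn.1 (e ▸ (List.mem_cons_self : x ∈ x :: t))
    refine ⟨carOdd (k y) * carOdd (k x), ?_⟩
    rw [carMonomial_cons, carMonomial_cons, carMonomial_cons, carMonomial_cons,
      ← mul_assoc, ← mul_assoc, factor_swap h hyx, smul_mul_assoc]
  | trans hp₁ hp₂ ih₁ ih₂ =>
    obtain ⟨n₁, e₁⟩ := ih₁ hn
    obtain ⟨n₂, e₂⟩ := ih₂ (hp₁.nodup_iff.mp hn)
    exact ⟨n₁ + n₂, by rw [e₁, e₂, smul_smul, ← pow_add]⟩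

lemma carOddCount_perm {l l' : List Γ} (hp : l.Perm l') (k : Γ → Fin 4) :
    carOddCount l k = carOddCount l' k := hp.countP_eq _

end Dev2

section Fwd
variable {Γ A : Type*} [Ring A] [StarRing A] [Algebra ℂ A]

lemma even_commute (a : Γ → A) (h : IsCAR a) {X Y : Finset Γ} (hXY : Disjoint X Y) :
    ∀ A₀ ∈ carSpanEven a X, ∀ B₀ ∈ carSpan a Y, A₀ * B₀ = B₀ * A₀ := by
  classical
  intro A₀ hA
  induction hA using Submodule.span_induction with
  | mem m hm =>
    intro B₀ hB
    induction hB using Submodule.span_induction with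
    | mem n hn =>
      obtain ⟨l₁, k₁, hnd₁, htf₁, hev₁, rfl⟩ := hm
      obtain ⟨l₂, k₂, hnd₂, htf₂, rfl⟩ := hn
      have hd : ∀ x ∈ l₁, x ∉ l₂ := by
        intro x hx hx2
        have hX : x ∈ X := htf₁ ▸ List.mem_toFinset.mpr hx
        have hY : x ∈ Y := htf₂ ▸ List.mem_toFinset.mpr hx2
        exact (Finset.disjoint_left.mp hXY hX) hY
      rw [monomial_swap h hd, (hev₁.mul_right _).neg_one_pow, one_smul]
    | zero => simp
    | add u v _ _ ihu ihv => rw [mul_add, add_mul, ihu, ihv]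
    | smul r u _ ih => rw [mul_smul_comm, smul_mul_assoc, ih]
  | zero => intro B₀ _; simp
  | add u v _ _ ihu ihv => intro B₀ hB; rw [add_mul, mul_add, ihu B₀ hB, ihv B₀ hB]
  | smul r u _ ih => intro B₀ hB; rw [smul_mul_assoc, mul_smul_comm, ih B₀ hB]

end Fwd

/-- if `A ∈ 𝔄_X⁺` and `B ∈ 𝔄_Y` with `X ∩ Y = ∅` then `[A,B] = 0`; conversely,
if the monomials supported in `X ∪ Y` (for a fixed enumeration `l`) are linearly independent,
`A ∈ 𝔄_X`, `B ∈ 𝔄_Y` and `[A,B] = 0`, then `A ∈ 𝔄_X⁺` or `B ∈ 𝔄_Y⁺`. -/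
theorem commutator_vanishes_iff_even
    {Γ A : Type*} [NormedRing A] [StarRing A] [CStarRing A] [NormedAlgebra ℂ A]
    (a : Γ → A) (hCAR : IsCAR a)
    (X Y : Finset Γ) (hXY : Disjoint X Y)
    (l : List Γ) (hl : l.Nodup) (hlXY : l.toFinset = X ∪ Y)
    (hind : LinearIndependent ℂ fun k : {x // x ∈ X ∪ Y} → Fin 4 =>
      carMonomial a l fun x => if h : x ∈ X ∪ Y then k ⟨x, h⟩ else 0) :
    (∀ A₀ ∈ carSpanEven a X, ∀ B₀ ∈ carSpan a Y, A₀ * B₀ - B₀ * A₀ = 0) ∧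
    (∀ A₀ ∈ carSpan a X, ∀ B₀ ∈ carSpan a Y, A₀ * B₀ - B₀ * A₀ = 0 →
      A₀ ∈ carSpanEven a X ∨ B₀ ∈ carSpanEven a Y) := by
  classical
  constructor
  · intro A₀ hA B₀ hB
    rw [even_commute a hCAR hXY A₀ hA B₀ hB, sub_self]
  · set v : ({x // x ∈ X ∪ Y} → Fin 4) → A := fun k =>
      carMonomial a l fun x => if h : x ∈ X ∪ Y then k ⟨x, h⟩ else 0 with hv
    intro A₀ hA B₀ hB hcomm
    set lX : List Γ := l.filter (fun x => decide (x ∈ X)) with hlXdef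
    set lY : List Γ := l.filter (fun x => decide (x ∈ Y)) with hlYdef
    have hmemX : ∀ x, x ∈ lX ↔ x ∈ X := by
      intro x
      simp only [hlXdef, List.mem_filter, decide_eq_true_eq]
      refine ⟨fun h => h.2, fun hx => ⟨?_, hx⟩⟩
      exact List.mem_toFinset.mp (hlXY ▸ Finset.mem_union_left Y hx)
    have hmemY : ∀ x, x ∈ lY ↔ x ∈ Y := by
      intro x
      simp only [hlYdef, List.mem_filter, decide_eq_true_eq]
      refine ⟨fun h => h.2, fun hx => ⟨?_, hx⟩⟩
      exact List.mem_toFinset.mp (hlXY ▸ Finset.mem_union_right X hx)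
    have hlXnd : lX.Nodup := hl.filter _
    have hlYnd : lY.Nodup := hl.filter _
    have hlXtf : lX.toFinset = X := by ext x; simp only [List.mem_toFinset]; exact hmemX x
    have hlYtf : lY.toFinset = Y := by ext x; simp only [List.mem_toFinset]; exact hmemY x
    have hdXY : ∀ x ∈ lX, x ∉ lY := fun x hx hy =>
      Finset.disjoint_left.mp hXY ((hmemX x).mp hx) ((hmemY x).mp hy)
    have happnd : (lX ++ lY).Nodup := hlXnd.append hlYnd hdXY
    have hperm : (lX ++ lY).Perm l :=
      List.perm_of_nodup_nodup_toFinset_eq happnd hl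
        (by rw [List.toFinset_append, hlXtf, hlYtf, hlXY])
    set extX : ({x // x ∈ X} → Fin 4) → Γ → Fin 4 :=
      fun k x => if h : x ∈ X then k ⟨x, h⟩ else 0 with hextX
    set extY : ({x // x ∈ Y} → Fin 4) → Γ → Fin 4 :=
      fun k x => if h : x ∈ Y then k ⟨x, h⟩ else 0 with hextY
    set M : ({x // x ∈ X} → Fin 4) → A := fun k => carMonomial a lX (extX k) with hM
    set N : ({x // x ∈ Y} → Fin 4) → A := fun k => carMonomial a lY (extY k) with hN
    -- spans are generated by the normalized monomials
    have hspanX : carSpan a X ≤ Submodule.span ℂ (Set.range M) := by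
      rw [carSpan, Submodule.span_le]
      rintro _ ⟨l', k', hnd', htf', rfl⟩
      obtain ⟨n, e⟩ := monomial_perm hCAR k'
        (List.perm_of_nodup_nodup_toFinset_eq hnd' hlXnd (htf'.trans hlXtf.symm)) hnd'
      have e2 : carMonomial a lX k' = M (fun x => k' x.1) := by
        apply carMonomial_congr
        intro x hx
        simp only [hM, hextX]
        rw [dif_pos ((hmemX x).mp hx)]
      rw [e, e2, ← Int.cast_smul_eq_zsmul ℂ]
      exact Submodule.smul_mem _ _ (Submodule.subset_span (Set.mem_range_self (fun x : {x // x ∈ X} => k' x.1)))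
    have hspanY : carSpan a Y ≤ Submodule.span ℂ (Set.range N) := by
      rw [carSpan, Submodule.span_le]
      rintro _ ⟨l', k', hnd', htf', rfl⟩
      obtain ⟨n, e⟩ := monomial_perm hCAR k'
        (List.perm_of_nodup_nodup_toFinset_eq hnd' hlYnd (htf'.trans hlYtf.symm)) hnd'
      have e2 : carMonomial a lY k' = N (fun x => k' x.1) := by
        apply carMonomial_congr
        intro x hx
        simp only [hN, hextY]
        rw [dif_pos ((hmemY x).mp hx)]
      rw [e, e2, ← Int.cast_smul_eq_zsmul ℂ]
      exact Submodule.smul_mem _ _ (Submodule.subset_span (Set.mem_range_self (fun x : {x // x ∈ Y} => k' x.1)))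
    have hgenXeven : ∀ k, Even (carOddCount lX (extX k)) → M k ∈ carSpanEven a X :=
      fun k hk => Submodule.subset_span ⟨lX, extX k, hlXnd, hlXtf, hk, rfl⟩
    have hgenYeven : ∀ k, Even (carOddCount lY (extY k)) → N k ∈ carSpanEven a Y :=
      fun k hk => Submodule.subset_span ⟨lY, extY k, hlYnd, hlYtf, hk, rfl⟩
    obtain ⟨c, hc⟩ := (Submodule.mem_span_range_iff_exists_fun ℂ).mp (hspanX hA)
    obtain ⟨d, hd⟩ := (Submodule.mem_span_range_iff_exists_fun ℂ).mp (hspanY hB)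
    -- gluing of patterns
    set glue : ({x // x ∈ X} → Fin 4) → ({x // x ∈ Y} → Fin 4) → ({x // x ∈ X ∪ Y} → Fin 4) :=
      fun k j x => if h : x.1 ∈ X then k ⟨x.1, h⟩
        else j ⟨x.1, (Finset.mem_union.mp x.2).resolve_left h⟩ with hglue
    have hswap : ∀ k j, N j * M k =
        ((-1 : ℤ) ^ (carOddCount lX (extX k) * carOddCount lY (extY j))) • (M k * N j) := by
      intro k j
      have hdYX : ∀ x ∈ lY, x ∉ lX := fun x hx hy => hdXY x hy hx
      simp only [hM, hN]
      rw [monomial_swap hCAR hdYX, Nat.mul_comm]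
    have hMN : ∀ k j, ∃ n : ℕ, M k * N j = ((-1 : ℤ) ^ n) • v (glue k j) := by
      intro k j
      have e1 : M k * N j =
          carMonomial a (lX ++ lY) (fun x => if h : x ∈ X ∪ Y then glue k j ⟨x, h⟩ else 0) := by
        rw [carMonomial_append]
        simp only [hM, hN]
        congr 1
        · apply carMonomial_congr
          intro x hx
          have hxX := (hmemX x).mp hx
          have hxU : x ∈ X ∪ Y := Finset.mem_union_left Y hxX
          simp only [hextX, hglue]
          rw [dif_pos hxX, dif_pos hxU, dif_pos hxX]
        · apply carMonomial_congr
          intro x hx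
          have hxY := (hmemY x).mp hx
          have hxX : ¬ x ∈ X := fun h => Finset.disjoint_left.mp hXY h hxY
          have hxU : x ∈ X ∪ Y := Finset.mem_union_right X hxY
          simp only [hextY, hglue]
          rw [dif_pos hxY, dif_pos hxU, dif_neg hxX]
      obtain ⟨n, e2⟩ := monomial_perm hCAR
        (fun x => if h : x ∈ X ∪ Y then glue k j ⟨x, h⟩ else 0) hperm happnd
      exact ⟨n, by rw [e1, e2]⟩
    choose n hn using hMN
    set zc : ({x // x ∈ X} → Fin 4) → ({x // x ∈ Y} → Fin 4) → ℂ := fun k j =>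
      (((1 - (-1 : ℤ) ^ (carOddCount lX (extX k) * carOddCount lY (extY j))) *
        (-1 : ℤ) ^ (n k j) : ℤ) : ℂ) with hzc
    have hkey : ∀ k j, (c k • M k) * (d j • N j) - (d j • N j) * (c k • M k) =
        (c k * d j * zc k j) • v (glue k j) := by
      intro k j
      rw [smul_mul_smul_comm, smul_mul_smul_comm, hswap k j, mul_comm (d j) (c k),
        ← smul_sub, hn k j, smul_smul, ← sub_smul]
      have hco : ((-1 : ℤ) ^ n k j -
          (-1) ^ (carOddCount lX (extX k) * carOddCount lY (extY j)) * (-1) ^ n k j) =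
          (1 - (-1 : ℤ) ^ (carOddCount lX (extX k) * carOddCount lY (extY j))) *
            (-1 : ℤ) ^ n k j := by ring
      rw [hco, ← Int.cast_smul_eq_zsmul ℂ, smul_smul]
    -- the equivalence between pairs of patterns and patterns on the union
    set E : (({x // x ∈ X} → Fin 4) × ({x // x ∈ Y} → Fin 4)) ≃ ({x // x ∈ X ∪ Y} → Fin 4) :=
      { toFun := fun p => glue p.1 p.2
        invFun := fun κ => (fun x => κ ⟨x.1, Finset.mem_union_left Y x.2⟩,
          fun x => κ ⟨x.1, Finset.mem_union_right X x.2⟩)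
        left_inv := by
          rintro ⟨k, j⟩
          refine Prod.ext ?_ ?_
          · funext x
            simp only [hglue]
            rw [dif_pos x.2]
          · funext x
            have hx : ¬ x.1 ∈ X := fun h => Finset.disjoint_left.mp hXY h x.2
            simp only [hglue]
            rw [dif_neg hx]
        right_inv := by
          intro κ
          funext x
          simp only [hglue]
          split
          · exact congrArg κ (Subtype.ext rfl)
          · exact congrArg κ (Subtype.ext rfl) } with hE
    have hEsymm : ∀ k j, E.symm (glue k j) = (k, j) := fun k j => E.symm_apply_apply (k, j)
    set g : ({x // x ∈ X ∪ Y} → Fin 4) → ℂ := fun κ =>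
      c (E.symm κ).1 * d (E.symm κ).2 * zc (E.symm κ).1 (E.symm κ).2 with hg
    have hsum : ∑ κ, g κ • v κ = 0 := by
      have e1 : ∑ κ, g κ • v κ = ∑ p : (({x // x ∈ X} → Fin 4) × ({x // x ∈ Y} → Fin 4)),
          (c p.1 * d p.2 * zc p.1 p.2) • v (glue p.1 p.2) := by
        rw [← Equiv.sum_comp E (fun κ => g κ • v κ)]
        refine Finset.sum_congr rfl fun p _ => ?_
        simp only [hg, Equiv.symm_apply_apply]
        rfl
      rw [e1, Fintype.sum_prod_type]
      have e2 : ∀ k j, (c k * d j * zc k j) • v (glue k j) =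
          (c k • M k) * (d j • N j) - (d j • N j) * (c k • M k) := fun k j => (hkey k j).symm
      calc ∑ k, ∑ j, (c k * d j * zc k j) • v (glue k j)
          = ∑ k, ∑ j, ((c k • M k) * (d j • N j) - (d j • N j) * (c k • M k)) := by
            exact Finset.sum_congr rfl fun k _ => Finset.sum_congr rfl fun j _ => e2 k j
        _ = (∑ k, c k • M k) * (∑ j, d j • N j) - (∑ j, d j • N j) * (∑ k, c k • M k) := by
            rw [Finset.sum_mul_sum, Finset.sum_mul_sum,
              Finset.sum_comm (s := Finset.univ) (t := Finset.univ)
                (f := fun j k => (d j • N j) * (c k • M k)),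
              ← Finset.sum_sub_distrib]
            exact Finset.sum_congr rfl fun k _ => Finset.sum_sub_distrib _ _
        _ = 0 := by rw [hc, hd, hcomm]
    have hzero : ∀ κ, g κ = 0 := Fintype.linearIndependent_iff.mp hind g hsum
    have hcd : ∀ k j, ¬ Even (carOddCount lX (extX k)) → ¬ Even (carOddCount lY (extY j)) →
        c k * d j = 0 := by
      intro k j hk hj
      have h1 := hzero (glue k j)
      simp only [hg, hEsymm k j] at h1
      have hodd : Odd (carOddCount lX (extX k) * carOddCount lY (extY j)) :=
        Nat.odd_mul.mpr ⟨Nat.not_even_iff_odd.mp hk, Nat.not_even_iff_odd.mp hj⟩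
      have h2 : ((1 - (-1 : ℤ) ^ (carOddCount lX (extX k) * carOddCount lY (extY j))) *
          (-1 : ℤ) ^ n k j) ≠ 0 := by
        apply mul_ne_zero
        · rw [hodd.neg_one_pow]; norm_num
        · exact pow_ne_zero _ (by norm_num)
      have hz : zc k j ≠ 0 := by
        simp only [hzc]
        exact Int.cast_ne_zero.mpr h2
      rcases mul_eq_zero.mp h1 with h | h
      · exact h
      · exact absurd h hz
    by_cases hAo : ∀ k, ¬ Even (carOddCount lX (extX k)) → c k = 0
    · left
      rw [← hc]
      refine Submodule.sum_mem _ fun k _ => ?_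
      by_cases hk : Even (carOddCount lX (extX k))
      · exact Submodule.smul_mem _ _ (hgenXeven k hk)
      · rw [hAo k hk, zero_smul]; exact Submodule.zero_mem _
    · right
      push_neg at hAo
      obtain ⟨k₀, hk₀, hc₀⟩ := hAo
      rw [← hd]
      refine Submodule.sum_mem _ fun j _ => ?_
      by_cases hj : Even (carOddCount lY (extY j))
      · exact Submodule.smul_mem _ _ (hgenYeven j hj)
      · have hdj : d j = 0 := by
          rcases mul_eq_zero.mp (hcd k₀ j hk₀ hj) with h | h
          · exact absurd h hc₀
          · exact h
        rw [hdj, zero_smul]; exact Submodule.zero_mem _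
end

section
/- Norm bound for operator-valued ODEs: Let ℋ be a complex Hilbert space, I ⊆ ℝ an interval, and A, B : I → B(ℋ) norm-continuous with A(t)* = A(t) for all t ∈ I. Fix t₀ ∈ I and f₀ ∈ B(ℋ), and let f : I → B(ℋ) be a (norm-)differentiable solution of f'(t) = i[A(t), f(t)] + B(t) with f(t₀) = f₀. Then for every t ∈ I, ‖f(t)‖ ≤ ‖f(t₀)‖ + ∫_{t₋}^{t₊} ‖B(s)‖ ds, where t₊ = max{t, t₀} and t₋ = min{t, t₀}. -/
set_option maxHeartbeats 1000000
set_option synthInstance.maxHeartbeats 400000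

open MeasureTheory Set NormedSpace Filter Topology

private lemma norm_conj_exp_aux
    {H : Type*} [NormedAddCommGroup H] [InnerProductSpace ℂ H] [CompleteSpace H]
    (a c : H →L[ℂ] H) (ha : a ∈ skewAdjoint (H →L[ℂ] H)) (h : ℝ) :
    ‖exp (h • a) * c * exp (h • (-a))‖ = ‖c‖ := by
  have ha' : h • a ∈ skewAdjoint (H →L[ℂ] H) := by
    rw [skewAdjoint.mem_iff, star_smul, skewAdjoint.mem_iff.mp ha, star_trivial, smul_neg]
  letI : NormedAlgebra ℚ (H →L[ℂ] H) := .restrictScalars ℚ ℂ _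
  have hU := exp_mem_unitary_of_mem_skewAdjoint ha'
  have hV := exp_mem_unitary_of_mem_skewAdjoint (neg_mem ha')
  rw [smul_neg, mul_assoc, CStarRing.norm_mem_unitary_mul _ hU,
    CStarRing.norm_mul_mem_unitary _ hV]

private lemma forward_bound_ode
    {H : Type*} [NormedAddCommGroup H] [InnerProductSpace ℂ H] [CompleteSpace H]
    (I : Set ℝ) (hI : I.OrdConnected)
    (A B : ℝ → H →L[ℂ] H)
    (hBcont : ContinuousOn B I)
    (hAsa : ∀ t ∈ I, IsSelfAdjoint (A t))
    (t₀ : ℝ) (ht₀ : t₀ ∈ I)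
    (f : ℝ → H →L[ℂ] H)
    (hfode : ∀ t ∈ I,
      HasDerivWithinAt f (Complex.I • (A t ∘L f t - f t ∘L A t) + B t) I t)
    (t : ℝ) (ht : t ∈ I) (hab : t₀ ≤ t) :
    ‖f t‖ ≤ ‖f t₀‖ + ∫ s in t₀..t, ‖B s‖ := by
  have hsub : Icc t₀ t ⊆ I := hI.out ht₀ ht
  -- a globally continuous extension of `‖B ·‖` from `Icc t₀ t`
  have hφ : Continuous fun s => ‖B ((projIcc t₀ t hab s : ℝ))‖ := by
    have : Continuous fun s : Icc t₀ t => B (s : ℝ) := (hBcont.mono hsub).restrict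
    exact (this.comp continuous_projIcc).norm
  set φ : ℝ → ℝ := fun s => ‖B ((projIcc t₀ t hab s : ℝ))‖ with hφdef
  have φ_eq : ∀ s ∈ Icc t₀ t, φ s = ‖B s‖ := fun s hs => by
    simp [hφdef, projIcc_of_mem hab hs]
  have hBd : ∀ x : ℝ, HasDerivAt (fun z => ‖f t₀‖ + ∫ s in t₀..z, φ s) (φ x) x := by
    intro x
    exact (intervalIntegral.integral_hasDerivAt_right (hφ.intervalIntegrable _ _)
      hφ.aestronglyMeasurable.stronglyMeasurableAtFilter hφ.continuousAt).const_add _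
  have hfc : ContinuousOn f I := fun z hz => (hfode z hz).continuousWithinAt
  -- the fencing argument
  have key : ∀ ⦃x⦄, x ∈ Icc t₀ t → ‖f x‖ ≤ ‖f t₀‖ + ∫ s in t₀..x, φ s := by
    apply image_le_of_liminf_slope_right_le_deriv_boundary
      ((hfc.mono hsub).norm)
      (by simp)
      (fun x _ => (hBd x).continuousAt.continuousWithinAt)
      (fun x _ => (hBd x).hasDerivWithinAt)
    intro x hx r hr
    have hxI : x ∈ I := hsub ⟨hx.1, hx.2.le⟩
    rw [φ_eq x ⟨hx.1, hx.2.le⟩] at hr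
    have haskew : Complex.I • A x ∈ skewAdjoint (H →L[ℂ] H) := by
      rw [skewAdjoint.mem_iff, star_smul, (hAsa x hxI).star_eq]
      simp [Complex.conj_I]
    have hφd : HasDerivAt (fun h : ℝ => exp (h • (Complex.I • A x)) * f x *
        exp (h • (-(Complex.I • A x))))
        ((Complex.I • A x) * f x - f x * (Complex.I • A x)) 0 := by
      have h1 : HasDerivAt (fun h : ℝ => exp (h • (Complex.I • A x))) (Complex.I • A x) 0 := by
        simpa using hasDerivAt_exp_smul_const (𝕂 := ℝ) (Complex.I • A x) 0
      have h2 : HasDerivAt (fun h : ℝ => exp (h • (-(Complex.I • A x))))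
          (-(Complex.I • A x)) 0 := by
        simpa using hasDerivAt_exp_smul_const (𝕂 := ℝ) (-(Complex.I • A x)) 0
      have := (h1.mul_const (f x)).mul h2
      simpa [mul_assoc, mul_neg, sub_eq_add_neg, Pi.mul_def] using this
    have hψ : HasDerivAt (fun z : ℝ => exp ((z - x) • (Complex.I • A x)) * f x *
        exp ((z - x) • (-(Complex.I • A x))))
        ((Complex.I • A x) * f x - f x * (Complex.I • A x)) x := by
      have hinner : HasDerivAt (fun z : ℝ => z - x) 1 x := (hasDerivAt_id x).sub_const x
      have := HasDerivAt.scomp (h := fun z : ℝ => z - x) x (by simpa using hφd) hinner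
      simpa [Function.comp_def] using this
    set ψ : ℝ → H →L[ℂ] H := fun z => exp ((z - x) • (Complex.I • A x)) * f x *
        exp ((z - x) • (-(Complex.I • A x))) with hψdef
    have hψx : ψ x = f x := by simp [hψdef, exp_zero]
    have hψnorm : ∀ z : ℝ, ‖ψ z‖ = ‖f x‖ := fun z =>
      norm_conj_exp_aux (Complex.I • A x) (f x) haskew (z - x)
    -- pass to derivative within `Ioi x`
    have hIo : I ∈ 𝓝[>] x :=
      mem_of_superset (Ioo_mem_nhdsGT_of_mem ⟨le_refl x, hx.2⟩)
        (fun z hz => hsub ⟨hx.1.trans hz.1.le, hz.2.le⟩)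
    have hXeq : (Complex.I • A x) * f x - f x * (Complex.I • A x)
        = Complex.I • (A x ∘L f x - f x ∘L A x) := by
      rw [smul_mul_assoc, mul_smul_comm, ← smul_sub]
      rfl
    have hw : HasDerivWithinAt (fun z => f z - ψ z) (B x) (Ioi x) x := by
      have hd := ((hfode x hxI).mono_of_mem_nhdsWithin hIo).sub hψ.hasDerivWithinAt
      rw [← hXeq] at hd
      simpa [Pi.sub_def] using hd
    set ε : ℝ := (r - ‖B x‖) / 2 with hεdef
    have hε : 0 < ε := by rw [hεdef]; linarith
    have hlo := (hasDerivWithinAt_iff_isLittleO.mp hw).def hε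
    apply Filter.Eventually.frequently
    filter_upwards [hlo, self_mem_nhdsWithin] with z hz hz'
    have hzx : (0:ℝ) < z - x := sub_pos.mpr hz'
    rw [hψx, sub_self, sub_zero] at hz
    have hnorm : ‖f z‖ - ‖f x‖ ≤ (‖B x‖ + ε) * (z - x) := by
      have h1 : ‖f z‖ ≤ ‖ψ z‖ + ‖f z - ψ z‖ := by
        have := norm_add_le (ψ z) (f z - ψ z); simpa using this
      have h2 : ‖f z - ψ z‖ ≤ ‖f z - ψ z - (z - x) • B x‖ + ‖(z - x) • B x‖ := by
        have := norm_add_le (f z - ψ z - (z - x) • B x) ((z - x) • B x); simpa using this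
      have h3 : ‖(z - x) • B x‖ = (z - x) * ‖B x‖ := by
        rw [norm_smul, Real.norm_eq_abs, abs_of_pos hzx]
      have h4 : ‖f z - ψ z - (z - x) • B x‖ ≤ ε * (z - x) := by
        calc ‖f z - ψ z - (z - x) • B x‖ ≤ ε * ‖z - x‖ := hz
        _ = ε * (z - x) := by rw [Real.norm_eq_abs, abs_of_pos hzx]
      have := hψnorm z
      nlinarith
    rw [slope_def_field, div_lt_iff₀ hzx]
    calc ‖f z‖ - ‖f x‖ ≤ (‖B x‖ + ε) * (z - x) := hnorm
      _ < r * (z - x) := by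
        apply mul_lt_mul_of_pos_right _ hzx
        rw [hεdef]; linarith
  calc ‖f t‖ ≤ ‖f t₀‖ + ∫ s in t₀..t, φ s := key (right_mem_Icc.mpr hab)
    _ = ‖f t₀‖ + ∫ s in t₀..t, ‖B s‖ := by
      congr 1
      apply intervalIntegral.integral_congr
      intro s hs
      exact φ_eq s (by rwa [uIcc_of_le hab] at hs)

open MeasureTheory in
/-- norm bound for operator-valued ODEs. If `f' = i[A(t), f] + B(t)` on an
interval `I` with `A(t)` self-adjoint, then
`‖f(t)‖ ≤ ‖f(t₀)‖ + ∫_{min t t₀}^{max t t₀} ‖B(s)‖ ds`. -/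
theorem norm_bound_operator_ode
    {H : Type*} [NormedAddCommGroup H] [InnerProductSpace ℂ H] [CompleteSpace H]
    (I : Set ℝ) (hI : I.OrdConnected)
    (A B : ℝ → H →L[ℂ] H)
    (hAcont : ContinuousOn A I) (hBcont : ContinuousOn B I)
    (hAsa : ∀ t ∈ I, IsSelfAdjoint (A t))
    (t₀ : ℝ) (ht₀ : t₀ ∈ I)
    (f₀ : H →L[ℂ] H) (f : ℝ → H →L[ℂ] H)
    (hfode : ∀ t ∈ I,
      HasDerivWithinAt f (Complex.I • (A t ∘L f t - f t ∘L A t) + B t) I t)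
    (hfinit : f t₀ = f₀)
    (t : ℝ) (ht : t ∈ I) :
    ‖f t‖ ≤ ‖f t₀‖ + ∫ s in (min t t₀)..(max t t₀), ‖B s‖ := by
  rcases le_total t₀ t with hab | hab
  · rw [min_eq_right hab, max_eq_left hab]
    exact forward_bound_ode I hI A B hBcont hAsa t₀ ht₀ f hfode t ht hab
  · rw [min_eq_left hab, max_eq_right hab]
    -- time reversal
    set c : ℝ := t + t₀ with hcdef
    set J : Set ℝ := (fun s => c - s) ⁻¹' I with hJdef
    have hJoc : J.OrdConnected := by
      constructor
      intro x hx y hy z hz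
      have : c - z ∈ Icc (c - y) (c - x) := ⟨by linarith [hz.2], by linarith [hz.1]⟩
      exact hI.out hy hx this
    have hrc : Continuous fun s : ℝ => c - s := by continuity
    have hmaps : ∀ s ∈ J, c - s ∈ I := fun s hs => hs
    have htJ : t ∈ J := by
      show c - t ∈ I
      have : c - t = t₀ := by rw [hcdef]; ring
      rwa [this]
    have ht₀J : t₀ ∈ J := by
      show c - t₀ ∈ I
      have : c - t₀ = t := by rw [hcdef]; ring
      rwa [this]
    have hBc : ContinuousOn (fun s => -B (c - s)) J :=
      ((hBcont.comp hrc.continuousOn hmaps).neg)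
    have hsa : ∀ s ∈ J, IsSelfAdjoint (-A (c - s)) := fun s hs => (hAsa _ hs).neg
    have hode : ∀ s ∈ J, HasDerivWithinAt (fun u => f (c - u))
        (Complex.I • ((-A (c - s)) ∘L f (c - s) - f (c - s) ∘L (-A (c - s))) + (-B (c - s))) J s := by
      intro s hs
      have hinner : HasDerivWithinAt (fun u : ℝ => c - u) (-1) J s := by
        simpa using ((hasDerivWithinAt_id s J).const_sub c)
      have houter := hfode (c - s) hs
      have := HasDerivWithinAt.scomp (h := fun u : ℝ => c - u) s houter hinner
        (fun u hu => hu)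
      have heq : (-1 : ℝ) • (Complex.I • (A (c - s) ∘L f (c - s) - f (c - s) ∘L A (c - s)) + B (c - s))
          = Complex.I • ((-A (c - s)) ∘L f (c - s) - f (c - s) ∘L (-A (c - s))) + (-B (c - s)) := by
        simp only [ContinuousLinearMap.neg_comp, ContinuousLinearMap.comp_neg]
        module
      rw [heq] at this
      exact this
    have hfwd := forward_bound_ode J hJoc (fun s => -A (c - s)) (fun s => -B (c - s))
      hBc hsa t htJ (fun u => f (c - u)) hode t₀ ht₀J hab
    have e1 : c - t₀ = t := by rw [hcdef]; ring
    have e2 : c - t = t₀ := by rw [hcdef]; ring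
    have hfwd' : ‖f (c - t₀)‖ ≤ ‖f (c - t)‖ + ∫ s in t..t₀, ‖-B (c - s)‖ := hfwd
    rw [e1, e2] at hfwd'
    calc ‖f t‖ ≤ ‖f t₀‖ + ∫ s in t..t₀, ‖-B (c - s)‖ := hfwd'
      _ = ‖f t₀‖ + ∫ s in t..t₀, ‖B s‖ := by
        congr 1
        have : ∀ s, ‖-B (c - s)‖ = ‖B (c - s)‖ := fun s => norm_neg _
        simp_rw [this]
        rw [intervalIntegral.integral_comp_sub_left (fun u => ‖B u‖) c, e1, e2]
end

section
/- One-step locality estimate, anticommutator version: Let Φ be an even time-dependent interaction on Γ, Λ ⊆ Γ finite, X ⊆ Λ, A ∈ 𝔄_X, B ∈ 𝔄_Λ, and s, t ∈ I with s ≤ t. Then ‖{τ_{t,s}^Λ(A), B}‖ ≤ ‖{τ_{t,s}^X(A), B}‖ + 2‖A‖ ∑_{Z ∈ S_Λ(X)} ∫_s^t ‖[τ_{r,s}^Λ(Φ(Z,r)), B]‖ dr, where τ^X is the Heisenberg dynamics generated by H_X(t) = ∑_{Z ⊆ X} Φ(Z,t). -/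
open scoped Classical

set_option linter.unusedSectionVars false
set_option linter.unusedVariables false
set_option maxHeartbeats 1000000

namespace CARaux

variable {Γ A : Type*} [Ring A] [StarRing A] [Algebra ℂ A] {a : Γ → A}

lemma half (z : A) (h : z + z = 0) : z = 0 := by
  have h2 : (2 : ℂ) • z = 0 := by rw [two_smul]; exact h
  have := smul_eq_zero.mp h2
  simpa using this.resolve_left (by norm_num)

lemma sq_zero (hCAR : IsCAR a) (x : Γ) : a x * a x = 0 := half _ (hCAR.1 x x)

lemma star_sq_zero (hCAR : IsCAR a) (x : Γ) : star (a x) * star (a x) = 0 :=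
  half _ (hCAR.2.1 x x)

lemma aa (hCAR : IsCAR a) (x y : Γ) : a x * a y = -(a y * a x) :=
  eq_neg_of_add_eq_zero_left (hCAR.1 x y)

lemma ss (hCAR : IsCAR a) (x y : Γ) :
    star (a x) * star (a y) = -(star (a y) * star (a x)) :=
  eq_neg_of_add_eq_zero_left (hCAR.2.1 x y)

lemma as (hCAR : IsCAR a) {x y : Γ} (h : x ≠ y) :
    a x * star (a y) = -(star (a y) * a x) := by
  have h0 := hCAR.2.2 x y
  rw [if_neg h] at h0
  exact eq_neg_of_add_eq_zero_left h0

lemma sa (hCAR : IsCAR a) {x y : Γ} (h : x ≠ y) :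
    star (a y) * a x = -(a x * star (a y)) := by
  rw [as hCAR h, neg_neg]

lemma asx (hCAR : IsCAR a) (x : Γ) :
    a x * star (a x) + star (a x) * a x = 1 := by
  have h0 := hCAR.2.2 x x
  rwa [if_pos rfl] at h0

lemma carFactor_zero (x : Γ) : carFactor a 0 x = 1 := rfl
lemma carFactor_one (x : Γ) : carFactor a 1 x = a x := rfl
lemma carFactor_two (x : Γ) : carFactor a 2 x = star (a x) := rfl
lemma carFactor_three (x : Γ) : carFactor a 3 x = star (a x) * a x := rfl

/-- factor-level commutation with `a x` and `star (a x)`, for `y ≠ x`. -/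
lemma factor_mul (hCAR : IsCAR a) {x y : Γ} (hyx : y ≠ x) (k : Fin 4)
    (c : A) (hc : c = a x ∨ c = star (a x)) :
    carFactor a k y * c =
      ((-1 : ℂ) ^ (if k = 1 ∨ k = 2 then 1 else 0)) • (c * carFactor a k y) := by
  have hxy : x ≠ y := hyx.symm
  have h1 : a y * c = -(c * a y) := by
    rcases hc with rfl | rfl
    · exact aa hCAR y x
    · exact as hCAR hyx
  have h2 : star (a y) * c = -(c * star (a y)) := by
    rcases hc with rfl | rfl
    · exact sa hCAR hxy
    · exact ss hCAR y x
  have hk4 : k = 0 ∨ k = 1 ∨ k = 2 ∨ k = 3 := by fin_cases k <;> decide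
  rcases hk4 with rfl | rfl | rfl | rfl
  · rw [carFactor_zero, if_neg (by decide : ¬((0:Fin 4) = 1 ∨ (0:Fin 4) = 2)),
      pow_zero, one_smul, one_mul, mul_one]
  · rw [carFactor_one, if_pos (Or.inl rfl)]
    simpa using h1
  · rw [carFactor_two, if_pos (Or.inr rfl)]
    simpa using h2
  · rw [carFactor_three, if_neg (by decide : ¬((3:Fin 4) = 1 ∨ (3:Fin 4) = 2))]
    rw [pow_zero, one_smul, mul_assoc, h1, mul_neg, ← mul_assoc, h2, neg_mul, neg_neg,
      mul_assoc]

lemma carMonomial_nil (k : Γ → Fin 4) : carMonomial a [] k = 1 := rfl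

lemma carMonomial_cons (y : Γ) (l : List Γ) (k : Γ → Fin 4) :
    carMonomial a (y :: l) k = carFactor a (k y) y * carMonomial a l k := by
  simp [carMonomial]

lemma carOddCount_cons (y : Γ) (l : List Γ) (k : Γ → Fin 4) :
    carOddCount (y :: l) k
      = (if k y = 1 ∨ k y = 2 then 1 else 0) + carOddCount l k := by
  simp only [carOddCount, List.countP_cons]
  by_cases h : k y = 1 ∨ k y = 2 <;> simp [h] <;> omega

lemma monomial_mul (hCAR : IsCAR a) {x : Γ} {l : List Γ} (hx : x ∉ l) (k : Γ → Fin 4)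
    (c : A) (hc : c = a x ∨ c = star (a x)) :
    carMonomial a l k * c = ((-1 : ℂ) ^ carOddCount l k) • (c * carMonomial a l k) := by
  induction l with
  | nil => simp [carMonomial_nil, carOddCount]
  | cons y l ih =>
    have hyx : y ≠ x := by rintro rfl; exact hx (List.mem_cons_self)
    have hx' : x ∉ l := fun h => hx (List.mem_cons_of_mem _ h)
    rw [carMonomial_cons, carOddCount_cons, mul_assoc, ih hx',
      mul_smul_comm, ← mul_assoc, factor_mul hCAR hyx (k y) c hc,
      smul_mul_assoc, smul_smul, pow_add, mul_assoc, mul_comm ((-1:ℂ) ^ carOddCount l k)]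

lemma even_monomial_comm (hCAR : IsCAR a) {x : Γ} {l : List Γ} (hx : x ∉ l)
    {k : Γ → Fin 4} (he : Even (carOddCount l k)) (c : A)
    (hc : c = a x ∨ c = star (a x)) :
    carMonomial a l k * c = c * carMonomial a l k := by
  rw [monomial_mul hCAR hx k c hc, he.neg_one_pow, one_smul]

/-- an element of `carSpanEven a Z` commutes with `a x` and `star (a x)` for `x ∉ Z`. -/
lemma spanEven_comm_gen (hCAR : IsCAR a) {Z : Finset Γ} {m : A}
    (hm : m ∈ carSpanEven a Z) {x : Γ} (hx : x ∉ Z) (c : A)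
    (hc : c = a x ∨ c = star (a x)) : m * c = c * m := by
  refine Submodule.span_induction ?_ (by simp) ?_ ?_ hm
  · rintro m ⟨l, k, hnd, hlZ, he, rfl⟩
    have hxl : x ∉ l := by
      intro hmem
      exact hx (by rw [← hlZ]; exact List.mem_toFinset.mpr hmem)
    exact even_monomial_comm hCAR hxl he c hc
  · intro u v _ _ hu hv
    rw [add_mul, mul_add, hu, hv]
  · intro t u _ hu
    rw [smul_mul_assoc, mul_smul_comm, hu]

/-- an element of `carSpanEven a Z` commutes with everything in `carSpan a X`
when `Z` and `X` are disjoint. -/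
lemma spanEven_comm_span (hCAR : IsCAR a) {Z X : Finset Γ} {m : A}
    (hm : m ∈ carSpanEven a Z) (hZX : ∀ x ∈ X, x ∉ Z)
    {y : A} (hy : y ∈ carSpan a X) : m * y = y * m := by
  refine Submodule.span_induction ?_ (by simp) ?_ ?_ hy
  · rintro y ⟨l, k, hnd, hlX, rfl⟩
    have hl : ∀ x ∈ l, x ∉ Z := by
      intro x hxl
      exact hZX x (by rw [← hlX]; exact List.mem_toFinset.mpr hxl)
    clear hlX hnd
    induction l with
    | nil => simp [carMonomial_nil]
    | cons z l ih =>
      have hz : z ∉ Z := hl z (List.mem_cons_self)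
      have hfac : m * carFactor a (k z) z = carFactor a (k z) z * m := by
        have h1 := spanEven_comm_gen hCAR hm hz (a z) (Or.inl rfl)
        have h2 := spanEven_comm_gen hCAR hm hz (star (a z)) (Or.inr rfl)
        have hk4 : k z = 0 ∨ k z = 1 ∨ k z = 2 ∨ k z = 3 := by
          generalize k z = kk at *; fin_cases kk <;> decide
        rcases hk4 with hk | hk | hk | hk <;> rw [hk]
        · rw [carFactor_zero, mul_one, one_mul]
        · rw [carFactor_one]; exact h1
        · rw [carFactor_two]; exact h2
        · rw [carFactor_three, ← mul_assoc, h2, mul_assoc, h1, ← mul_assoc]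
      rw [carMonomial_cons, ← mul_assoc, hfac, mul_assoc,
        ih (fun x hxl => hl x (List.mem_cons_of_mem _ hxl)), ← mul_assoc]
  · intro u v _ _ hu hv
    rw [add_mul, mul_add, hu, hv]
  · intro t u _ hu
    rw [smul_mul_assoc, mul_smul_comm, hu]

end CARaux

namespace CARaux

section StarMono
variable {Γ A : Type*} [Ring A] [StarRing A] [Algebra ℂ A] {a : Γ → A}

/-- The pattern swap induced by `star` on factors. -/
def carSwap : Fin 4 → Fin 4 := ![0, 2, 1, 3]

lemma star_carFactor (k : Fin 4) (x : Γ) :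
    star (carFactor a k x) = carFactor a (carSwap k) x := by
  have hk4 : k = 0 ∨ k = 1 ∨ k = 2 ∨ k = 3 := by fin_cases k <;> decide
  rcases hk4 with rfl | rfl | rfl | rfl
  · rw [carFactor_zero, show carSwap 0 = 0 from rfl, carFactor_zero, star_one]
  · rw [carFactor_one, show carSwap 1 = 2 from rfl, carFactor_two]
  · rw [carFactor_two, show carSwap 2 = 1 from rfl, carFactor_one, star_star]
  · rw [carFactor_three, show carSwap 3 = 3 from rfl, carFactor_three, star_mul, star_star]

lemma carMonomial_append (l₁ l₂ : List Γ) (k : Γ → Fin 4) :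
    carMonomial a (l₁ ++ l₂) k = carMonomial a l₁ k * carMonomial a l₂ k := by
  simp [carMonomial]

lemma star_carMonomial (l : List Γ) (k : Γ → Fin 4) :
    star (carMonomial a l k) = carMonomial a l.reverse (fun x => carSwap (k x)) := by
  induction l with
  | nil => simp [carMonomial_nil]
  | cons y l ih =>
    rw [carMonomial_cons, star_mul, ih, List.reverse_cons, carMonomial_append,
      carMonomial_cons, carMonomial_nil, mul_one, star_carFactor]

lemma star_mem_carSpan [StarModule ℂ A] {X : Finset Γ} {m : A} (hm : m ∈ carSpan a X) :
    star m ∈ carSpan a X := by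
  refine Submodule.span_induction ?_ (by simp) ?_ ?_ hm
  · rintro m ⟨l, k, hnd, hlX, rfl⟩
    rw [star_carMonomial]
    exact Submodule.subset_span
      ⟨l.reverse, fun x => carSwap (k x), List.nodup_reverse.mpr hnd,
        by rw [List.toFinset_reverse]; exact hlX, rfl⟩
  · intro u v _ _ hu hv; rw [star_add]; exact add_mem hu hv
  · intro c u _ hu; rw [star_smul]; exact Submodule.smul_mem _ _ hu

end StarMono

section StarI

variable {Γ A : Type*} [NormedRing A] [StarRing A] [CStarRing A] [NormedAlgebra ℂ A]

/-- In any C*-algebra containing CAR elements, `star` is automatically conjugate-linear on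
the central copy of `ℂ`. -/
lemma star_I_one {a : Γ → A} (hCAR : IsCAR a) (x₀ : Γ) :
    star (Complex.I • (1 : A)) = -(Complex.I • (1 : A)) := by
  set i1 : A := Complex.I • (1 : A) with hi1
  set J : A := star i1 with hJ
  have hcen : ∀ z : A, i1 * z = z * i1 := fun z => by
    rw [hi1, smul_mul_assoc, mul_smul_comm, one_mul, mul_one]
  have hJc : ∀ z : A, J * z = z * J := by
    intro z
    conv_lhs => rw [← star_star z]
    rw [hJ, ← star_mul, ← hcen, star_mul, star_star]
  have hii : i1 * i1 = -1 := by
    rw [hi1, smul_mul_assoc, mul_smul_comm, one_mul, smul_smul, Complex.I_mul_I,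
      neg_smul, one_smul]
  have hJ2 : J * J = -1 := by
    rw [hJ, ← star_mul, hii, star_neg, star_one]
  set K : A := i1 * J with hK
  have hsK : star K = K := by
    rw [hK, star_mul, hJ, star_star]
  have hKc : ∀ z : A, K * z = z * K := fun z => by
    rw [hK, mul_assoc, hJc, ← mul_assoc, hcen, mul_assoc]
  have hK2 : K * K = 1 := by
    have h1 : J * (i1 * J) = i1 * (J * J) := by rw [← mul_assoc, hJc, mul_assoc]
    rw [hK, mul_assoc, h1, hJ2, ← mul_assoc, hii]
    simp
  have hJK : J = -(i1 * K) := by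
    rw [hK, ← mul_assoc, hii, neg_one_mul, neg_neg]
  set e : A := (2⁻¹ : ℂ) • (1 - K) with he
  have hKe : K * e = -e := by
    rw [he, mul_smul_comm, mul_sub, mul_one, hK2, ← smul_neg, neg_sub]
  have hec : ∀ z : A, e * z = z * e := fun z => by
    rw [he, smul_mul_assoc, mul_smul_comm, sub_mul, mul_sub, one_mul, mul_one, hKc]
  have h1K : (1 - K) * (1 - K) = (1 - K) + (1 - K) := by
    rw [mul_sub, sub_mul, sub_mul, hK2]
    simp only [mul_one, one_mul]
    abel
  have hee : e * e = e := by
    rw [he, smul_mul_assoc, mul_smul_comm, smul_smul, h1K, smul_add, ← add_smul]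
    congr 1
    norm_num
  have h2e : e + e = 1 - K := by
    rw [he, ← add_smul]
    norm_num
  have hse : star e = e := by
    have h3 : star e + star e = e + e := by
      rw [← star_add, h2e, star_sub, star_one, hsK]
    have h4 : (star e - e) + (star e - e) = 0 := by
      rw [sub_add_sub_comm, h3, sub_self]
    exact sub_eq_zero.mp (half _ h4)
  have hJe : J * e = Complex.I • e := by
    rw [hJK, neg_mul, mul_assoc, hKe, mul_neg, neg_neg, hi1, smul_mul_assoc, one_mul]
  -- the CAR element
  set b : A := a x₀ with hb
  have hb2 : b * b = 0 := sq_zero hCAR x₀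
  have hsb2 : star b * star b = 0 := star_sq_zero hCAR x₀
  set p : A := b * star b with hp
  set q : A := star b * b with hq
  have hpq : p + q = 1 := asx hCAR x₀
  have hqval : q = 1 - p := by rw [← hpq]; abel
  have hps : p * star b = 0 := by rw [hp, mul_assoc, hsb2, mul_zero]
  have hbp : b * p = 0 := by rw [hp, ← mul_assoc, hb2, zero_mul]
  have hpp : p * p = p := by
    have h5 : p * p = b * ((star b * b) * star b) := by rw [hp, mul_assoc, mul_assoc]
    rw [h5, ← hq, hqval, sub_mul, one_mul, mul_sub, ← mul_assoc, ← hp, hbp, zero_mul,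
      sub_zero]
  have hpb : p * b = b := by
    have h5 : p * b = b * q := by rw [hp, hq, mul_assoc]
    rw [h5, hqval, mul_sub, mul_one, hbp, sub_zero]
  have hqq : q * q = q := by
    have h5 : q * q = star b * (p * b) := by
      rw [hq, hp, mul_assoc, ← mul_assoc b (star b) b]
    rw [h5, hpb, ← hq]
  set E11 : A := e * p with hE11
  set E12 : A := e * b with hE12
  set E21 : A := e * star b with hE21
  set E22 : A := e * q with hE22
  have hprod : ∀ u v : A, (e * u) * (e * v) = e * (u * v) := by
    intro u v
    rw [mul_assoc, ← mul_assoc u e v, ← hec u, mul_assoc e u v, ← mul_assoc, hee]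
  have hE1212 : E12 * E21 = E11 := by rw [hE12, hE21, hprod, ← hp, ← hE11]
  have hE2112 : E21 * E12 = E22 := by rw [hE21, hE12, hprod, ← hq, ← hE22]
  have hE11sq : E11 * E11 = E11 := by rw [hE11, hprod, hpp]
  have hE11E21 : E11 * E21 = 0 := by rw [hE11, hE21, hprod, hps, mul_zero]
  have hE12E11 : E12 * E11 = 0 := by rw [hE12, hE11, hprod, hbp, mul_zero]
  have hE22sq : E22 * E22 = E22 := by rw [hE22, hprod, hqq]
  have hE1122 : E11 + E22 = e := by rw [hE11, hE22, ← mul_add, hpq, mul_one]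
  have hsp : star p = p := by rw [hp, star_mul, star_star]
  have hsE11 : star E11 = E11 := by rw [hE11, star_mul, hsp, hse, ← hec]
  have hsE21 : star E21 = E12 := by rw [hE21, star_mul, star_star, hse, ← hec, hE12]
  have hsmulE : star (Complex.I • E21) = Complex.I • E12 := by
    have h6 : Complex.I • E21 = i1 * E21 := by rw [hi1, smul_mul_assoc, one_mul]
    rw [h6, star_mul, hsE21, ← hJ, ← hJc, hE12, ← mul_assoc, hJe, smul_mul_assoc]
  set x : A := E11 + Complex.I • E21 with hx
  have hsx : star x = E11 + Complex.I • E12 := by rw [hx, star_add, hsE11, hsmulE]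
  have hxx : star x * x = 0 := by
    rw [hsx, hx, add_mul, mul_add, mul_add, hE11sq, mul_smul_comm, hE11E21,
      smul_mul_assoc, hE12E11, smul_mul_assoc, mul_smul_comm, hE1212, smul_smul,
      Complex.I_mul_I, neg_smul, one_smul]
    simp
  have hx0 : x = 0 := by
    have h7 := CStarRing.norm_star_mul_self (x := x)
    rw [hxx, norm_zero] at h7
    have h8 : ‖x‖ = 0 := by nlinarith [norm_nonneg x]
    exact norm_eq_zero.mp h8
  have hE11_0 : E11 = 0 := by
    have h8 : E11 * x = E11 := by
      rw [hx, mul_add, hE11sq, mul_smul_comm, hE11E21, smul_zero, add_zero]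
    rw [hx0, mul_zero] at h8
    exact h8.symm
  have hE22_0 : E22 = 0 := by
    have h9 : E22 = E21 * ((E12 * E21) * E12) :=
      calc E22 = E22 * E22 := hE22sq.symm
        _ = (E21 * E12) * (E21 * E12) := by rw [hE2112]
        _ = E21 * ((E12 * E21) * E12) := by rw [mul_assoc, ← mul_assoc E12 E21 E12]
    rw [h9, hE1212, hE11_0, zero_mul, mul_zero]
  have he0 : e = 0 := by rw [← hE1122, hE11_0, hE22_0, add_zero]
  have hK1 : K = 1 := by
    have h10 : (1 : A) - K = 0 := by rw [← h2e, he0, add_zero]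
    exact (sub_eq_zero.mp h10).symm
  rw [hJ] at *
  rw [hJK, hK1, mul_one]

/-- `star` is real-linear. -/
lemma star_real_smul (r : ℝ) (y : A) : star (r • y) = r • star y := by
  have hc : Continuous (star : A → A) := continuous_star
  set L := (starAddEquiv : A ≃+ A).toAddMonoidHom.toRealLinearMap hc with hLdef
  have hL : ∀ z : A, L z = star z := by
    intro z
    have h1 := AddMonoidHom.coe_toRealLinearMap
      (starAddEquiv : A ≃+ A).toAddMonoidHom hc
    rw [hLdef]
    exact congrFun h1 z
  calc star (r • y) = L (r • y) := (hL _).symm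
    _ = r • L y := L.map_smul r y
    _ = r • star y := by rw [hL]

/-- `star` is conjugate-linear, given the behaviour on `I • 1`. -/
lemma star_complex_smul (hI1 : star (Complex.I • (1 : A)) = -(Complex.I • (1 : A)))
    (c : ℂ) (y : A) : star (c • y) = (starRingEnd ℂ) c • star y := by
  have hIz : ∀ z : A, star (Complex.I • z) = -(Complex.I • star z) := by
    intro z
    have h1 : Complex.I • z = (Complex.I • (1 : A)) * z := by
      rw [smul_mul_assoc, one_mul]
    rw [h1, star_mul, hI1, mul_neg, mul_smul_comm, mul_one]
  have hdec : c • y = (c.re : ℝ) • y + (c.im : ℝ) • (Complex.I • y) := by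
    rw [← Complex.coe_smul, ← Complex.coe_smul, smul_smul, ← add_smul]
    congr 1
    simp [Complex.ext_iff]
  have hdec2 : (starRingEnd ℂ) c • star y
      = (c.re : ℝ) • star y - (c.im : ℝ) • (Complex.I • star y) := by
    rw [← Complex.coe_smul, ← Complex.coe_smul, smul_smul, ← sub_smul]
    congr 1
    simp [Complex.ext_iff]
  rw [hdec, star_add, star_real_smul, star_real_smul, hIz, smul_neg, ← sub_eq_add_neg, hdec2]

end StarI
end CARaux

namespace CARaux

section Key
variable {A : Type*} [NormedRing A] [StarRing A] [CStarRing A] [NormedAlgebra ℂ A]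
  [StarModule ℂ A]

lemma key_ineq (h1A : ‖(1 : A)‖ ≤ 1) (E y : A) (hE : star E = -E) (h : ℝ) :
    ‖y + h • (E * y - y * E)‖ ≤ ‖y‖ + 2 * h ^ 2 * ‖E‖ ^ 2 * ‖y‖ := by
  have hid : y + h • (E * y - y * E)
      = (1 + h • E) * y * (1 - h • E) + (h ^ 2) • (E * y * E) := by
    simp only [add_mul, mul_add, mul_sub, sub_mul, one_mul, mul_one,
      smul_mul_assoc, mul_smul_comm, smul_smul, smul_sub, smul_add, pow_two]
    abel
  have hsq : ∀ z : A, star z * z = 1 - (h * h) • (E * E) →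
      ‖z‖ * ‖z‖ ≤ 1 + h ^ 2 * ‖E‖ ^ 2 := by
    intro z hz
    have h2 := CStarRing.norm_star_mul_self (x := z)
    rw [hz] at h2
    have h3 : ‖(1 : A) - (h * h) • (E * E)‖ ≤ ‖(1 : A)‖ + ‖(h * h) • (E * E)‖ :=
      norm_sub_le _ _
    have h4 : ‖(h * h) • (E * E)‖ ≤ h ^ 2 * ‖E‖ ^ 2 := by
      rw [norm_smul]
      have h5 : ‖E * E‖ ≤ ‖E‖ * ‖E‖ := norm_mul_le _ _
      have h6 : |h * h| = h * h := abs_of_nonneg (mul_self_nonneg h)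
      rw [Real.norm_eq_abs, h6]
      nlinarith [norm_nonneg (E * E), mul_self_nonneg h]
    nlinarith
  have hstar_plus : star (1 + h • E) = 1 - h • E := by
    rw [star_add, star_one, star_smul, star_trivial, hE, smul_neg, ← sub_eq_add_neg]
  have hstar_minus : star (1 - h • E) = 1 + h • E := by
    rw [star_sub, star_one, star_smul, star_trivial, hE, smul_neg, sub_neg_eq_add]
  have hprod1 : (1 - h • E) * (1 + h • E) = 1 - (h * h) • (E * E) := by
    simp only [add_mul, mul_add, sub_mul, mul_sub, one_mul, mul_one,
      smul_mul_assoc, mul_smul_comm, smul_add, smul_sub, smul_smul]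
    abel
  have hprod2 : (1 + h • E) * (1 - h • E) = 1 - (h * h) • (E * E) := by
    simp only [add_mul, mul_add, sub_mul, mul_sub, one_mul, mul_one,
      smul_mul_assoc, mul_smul_comm, smul_add, smul_sub, smul_smul]
    abel
  have hb1 : ‖(1 : A) + h • E‖ * ‖(1 : A) + h • E‖ ≤ 1 + h ^ 2 * ‖E‖ ^ 2 := by
    apply hsq
    rw [hstar_plus, hprod1]
  have hb2 : ‖(1 : A) - h • E‖ * ‖(1 : A) - h • E‖ ≤ 1 + h ^ 2 * ‖E‖ ^ 2 := by
    apply hsq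
    rw [hstar_minus, hprod2]
  have hmul : ‖(1 : A) + h • E‖ * ‖(1 : A) - h • E‖ ≤ 1 + h ^ 2 * ‖E‖ ^ 2 := by
    nlinarith [norm_nonneg ((1 : A) + h • E), norm_nonneg ((1 : A) - h • E),
      sq_nonneg h, sq_nonneg ‖E‖, sq_nonneg (h * ‖E‖)]
  have hterm1 : ‖(1 + h • E) * y * (1 - h • E)‖
      ≤ (1 + h ^ 2 * ‖E‖ ^ 2) * ‖y‖ := by
    calc ‖(1 + h • E) * y * (1 - h • E)‖
        ≤ ‖(1 + h • E) * y‖ * ‖1 - h • E‖ := norm_mul_le _ _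
      _ ≤ ‖(1 : A) + h • E‖ * ‖y‖ * ‖(1 : A) - h • E‖ := by
          gcongr; exact norm_mul_le _ _
      _ ≤ (1 + h ^ 2 * ‖E‖ ^ 2) * ‖y‖ := by
          nlinarith [norm_nonneg y, norm_nonneg ((1 : A) + h • E),
            norm_nonneg ((1 : A) - h • E)]
  have hterm2 : ‖(h ^ 2) • (E * y * E)‖ ≤ h ^ 2 * ‖E‖ ^ 2 * ‖y‖ := by
    rw [norm_smul, Real.norm_eq_abs, abs_of_nonneg (sq_nonneg h)]
    have h5 : ‖E * y * E‖ ≤ ‖E‖ * ‖y‖ * ‖E‖ := by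
      calc ‖E * y * E‖ ≤ ‖E * y‖ * ‖E‖ := norm_mul_le _ _
        _ ≤ ‖E‖ * ‖y‖ * ‖E‖ := by gcongr; exact norm_mul_le _ _
    nlinarith [sq_nonneg h, norm_nonneg E, norm_nonneg y]
  calc ‖y + h • (E * y - y * E)‖
      = ‖(1 + h • E) * y * (1 - h • E) + (h ^ 2) • (E * y * E)‖ := by rw [hid]
    _ ≤ ‖(1 + h • E) * y * (1 - h • E)‖ + ‖(h ^ 2) • (E * y * E)‖ := norm_add_le _ _
    _ ≤ (1 + h ^ 2 * ‖E‖ ^ 2) * ‖y‖ + h ^ 2 * ‖E‖ ^ 2 * ‖y‖ := by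
        exact add_le_add hterm1 hterm2
    _ = ‖y‖ + 2 * h ^ 2 * ‖E‖ ^ 2 * ‖y‖ := by ring

end Key
end CARaux

namespace CARaux

section Alg
variable {A : Type*} [Ring A] [Algebra ℂ A]

/-- Combination of the product-rule terms for `G' = i[D₁,G]`. -/
lemma Gderiv_alg (uu ww vv sv C HL HX F1 F2 : A)
    (huw : ∀ z : A, uu * (ww * z) = z)
    (hsplit : HL = HX + F1 + F2)
    (hc : ∀ z : A, F2 * (vv * (C * (sv * z))) = vv * (C * (sv * (F2 * z)))) :
    ((Complex.I • (ww * HL)) * (vv * C * sv)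
        + ww * (((-Complex.I) • (HX * vv)) * C * sv + (vv * C) * (Complex.I • (sv * HX)))) * uu
      + (ww * (vv * C * sv)) * ((-Complex.I) • (HL * uu))
    = Complex.I • ((ww * F1 * uu) * (ww * (vv * C * sv) * uu)
        - (ww * (vv * C * sv) * uu) * (ww * F1 * uu)) := by
  subst hsplit
  simp only [neg_smul, smul_mul_assoc, mul_smul_comm, add_mul, mul_add, sub_mul, mul_sub,
    smul_add, smul_sub, smul_neg, neg_mul, mul_neg, neg_neg, mul_assoc, huw, hc]
  abel

/-- `{i[d,g],b} = i[d,{g,b}] - i{g,[d,b]}`. -/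
lemma anticomm_alg (d g b : A) :
    (Complex.I • (d * g - g * d)) * b + b * (Complex.I • (d * g - g * d))
      = Complex.I • (d * (g * b + b * g) - (g * b + b * g) * d)
        + -(Complex.I • (g * (d * b - b * d) + (d * b - b * d) * g)) := by
  simp only [smul_mul_assoc, mul_smul_comm, mul_add, add_mul, mul_sub, sub_mul,
    smul_add, smul_sub, smul_neg, mul_assoc]
  abel

end Alg
end CARaux


open MeasureTheory in
/-- one-step locality estimate, anticommutator version. -/
theorem one_step_locality_anticommutator
    {Γ A : Type*} [Countable Γ] [DecidableEq Γ]
    [NormedRing A] [StarRing A] [CStarRing A] [NormedAlgebra ℂ A] [CompleteSpace A]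
    (a : Γ → A) (hCAR : IsCAR a)
    -- the interval `I`
    (I : Set ℝ) (hI : I.OrdConnected)
    -- the even, time-dependent interaction `Φ`
    (Φ : Finset Γ → ℝ → A)
    (hΦsa : ∀ Z : Finset Γ, ∀ t ∈ I, star (Φ Z t) = Φ Z t)
    (hΦeven : ∀ Z : Finset Γ, ∀ t ∈ I, Φ Z t ∈ carSpanEven a Z)
    (hΦcont : ∀ Z : Finset Γ, ContinuousOn (Φ Z) I)
    -- the finite volume `Λ` and the sub-volume `X ⊆ Λ`
    (Λ X : Finset Γ) (hXΛ : X ⊆ Λ)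
    -- the unitary propagator `U_Λ(t,s)` generated by `H_Λ(t) = ∑_{Z ⊆ Λ} Φ(Z,t)`
    (U : ℝ → ℝ → A)
    (hUunitary : ∀ s ∈ I, ∀ t ∈ I, U t s ∈ unitary A)
    (hUmem : ∀ s ∈ I, ∀ t ∈ I, U t s ∈ carSpan a Λ)
    (hUinit : ∀ s ∈ I, U s s = 1)
    (hUode : ∀ s ∈ I, ∀ t ∈ I,
      HasDerivWithinAt (fun r => U r s)
        ((-Complex.I) • ((∑ Z ∈ Λ.powerset, Φ Z t) * U t s)) I t)
    -- the unitary propagator `U_X(t,s)` generated by `H_X(t) = ∑_{Z ⊆ X} Φ(Z,t)`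
    (V : ℝ → ℝ → A)
    (hVunitary : ∀ s ∈ I, ∀ t ∈ I, V t s ∈ unitary A)
    (hVmem : ∀ s ∈ I, ∀ t ∈ I, V t s ∈ carSpan a X)
    (hVinit : ∀ s ∈ I, V s s = 1)
    (hVode : ∀ s ∈ I, ∀ t ∈ I,
      HasDerivWithinAt (fun r => V r s)
        ((-Complex.I) • ((∑ Z ∈ X.powerset, Φ Z t) * V t s)) I t)
    -- the observables `A₀ ∈ 𝔄_X` and `B₀ ∈ 𝔄_Λ`
    (A₀ B₀ : A) (hA : A₀ ∈ carSpan a X) (hB : B₀ ∈ carSpan a Λ)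
    (s t : ℝ) (hs : s ∈ I) (ht : t ∈ I) (hst : s ≤ t) :
    ‖(star (U t s) * A₀ * U t s) * B₀ + B₀ * (star (U t s) * A₀ * U t s)‖ ≤
      ‖(star (V t s) * A₀ * V t s) * B₀ + B₀ * (star (V t s) * A₀ * V t s)‖ +
      2 * ‖A₀‖ *
        ∑ Z ∈ Λ.powerset.filter (fun Z => (Z ∩ X).Nonempty ∧ (Z \ X).Nonempty),
          ∫ r in s..t,
            ‖(star (U r s) * Φ Z r * U r s) * B₀ - B₀ * (star (U r s) * Φ Z r * U r s)‖ := by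
  classical
  have hRHSnn : 0 ≤ 2 * ‖A₀‖ *
      ∑ Z ∈ Λ.powerset.filter (fun Z => (Z ∩ X).Nonempty ∧ (Z \ X).Nonempty),
        ∫ r in s..t,
          ‖(star (U r s) * Φ Z r * U r s) * B₀ - B₀ * (star (U r s) * Φ Z r * U r s)‖ := by
    apply mul_nonneg (by positivity)
    apply Finset.sum_nonneg
    intro Z _
    exact intervalIntegral.integral_nonneg hst (fun r _ => norm_nonneg _)
  rcases subsingleton_or_nontrivial A with hSub | hNT
  · have h0 : ((star (U t s) * A₀ * U t s) * B₀ + B₀ * (star (U t s) * A₀ * U t s))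
        = 0 := Subsingleton.elim _ _
    rw [h0, norm_zero]
    exact add_nonneg (norm_nonneg _) hRHSnn
  have hnorm1 : ‖(1 : A)‖ = 1 := by
    have h1 := CStarRing.norm_star_mul_self (x := (1 : A))
    rw [star_one, one_mul] at h1
    have h2 : ‖(1 : A)‖ ≠ 0 := norm_ne_zero_iff.mpr one_ne_zero
    have h3 : ‖(1 : A)‖ * ‖(1 : A)‖ = ‖(1 : A)‖ * 1 := by rw [mul_one]; exact h1.symm
    exact mul_left_cancel₀ h2 h3
  have hun : ∀ z : A, z ∈ unitary A → ‖z‖ = 1 := by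
    intro z hz
    have h1 := CStarRing.norm_star_mul_self (x := z)
    rw [Unitary.star_mul_self_of_mem hz, hnorm1] at h1
    have h2 : (‖z‖ - 1) * (‖z‖ + 1) = 0 := by nlinarith
    rcases mul_eq_zero.mp h2 with h3 | h3
    · linarith
    · nlinarith [norm_nonneg z]
  rcases isEmpty_or_nonempty Γ with hEmp | hNE
  · -- Γ empty: everything is scalar, and conjugation is trivial
    have hscal : ∀ (Y : Finset Γ) (y : A), y ∈ carSpan a Y → ∃ c : ℂ, y = c • 1 := by
      intro Y y hy
      have h2 : carSpan a Y ≤ Submodule.span ℂ {(1 : A)} := by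
        apply Submodule.span_le.mpr
        rintro m ⟨l, k, _, _, rfl⟩
        cases l with
        | nil => exact Submodule.subset_span (by simp [CARaux.carMonomial_nil])
        | cons hd _ => exact (hEmp.false hd).elim
      obtain ⟨c, hc⟩ := Submodule.mem_span_singleton.mp (h2 hy)
      exact ⟨c, hc.symm⟩
    have hconj : ∀ (W : A), W ∈ unitary A → (∃ c : ℂ, W = c • 1) →
        star W * A₀ * W = A₀ := by
      rintro W hWu ⟨c, hc⟩
      have hcen : ∀ z : A, W * z = z * W := by
        intro z; rw [hc, smul_mul_assoc, mul_smul_comm, one_mul, mul_one]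
      calc star W * A₀ * W = star W * (A₀ * W) := mul_assoc _ _ _
        _ = star W * (W * A₀) := by rw [← hcen]
        _ = star W * W * A₀ := (mul_assoc _ _ _).symm
        _ = A₀ := by rw [Unitary.star_mul_self_of_mem hWu, one_mul]
    rw [hconj (U t s) (hUunitary s hs t ht) (hscal Λ _ (hUmem s hs t ht)),
      hconj (V t s) (hVunitary s hs t ht) (hscal X _ (hVmem s hs t ht))]
    exact le_add_of_nonneg_right hRHSnn
  -- main case
  obtain ⟨x₀⟩ := hNE
  have hI1 : star (Complex.I • (1 : A)) = -(Complex.I • (1 : A)) :=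
    CARaux.star_I_one hCAR x₀
  haveI : StarModule ℂ A := ⟨fun c y => CARaux.star_complex_smul hI1 c y⟩
  have hIcc : Set.Icc s t ⊆ I := Set.OrdConnected.out hI hs ht
  -- interactions
  set SS : Finset (Finset Γ) :=
    Λ.powerset.filter (fun Z => (Z ∩ X).Nonempty ∧ (Z \ X).Nonempty) with hSS
  set TT : Finset (Finset Γ) :=
    Λ.powerset.filter (fun Z => ¬(Z ∩ X).Nonempty ∧ (Z \ X).Nonempty) with hTT
  set HL : ℝ → A := fun r => ∑ Z ∈ Λ.powerset, Φ Z r with hHL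
  set HX : ℝ → A := fun r => ∑ Z ∈ X.powerset, Φ Z r with hHX
  set F1 : ℝ → A := fun r => ∑ Z ∈ SS, Φ Z r with hF1
  set F2 : ℝ → A := fun r => ∑ Z ∈ TT, Φ Z r with hF2
  have hHsplit : ∀ r : ℝ, HL r = HX r + F1 r + F2 r := by
    intro r
    have e1 : Λ.powerset.filter (fun Z => Z ⊆ X) = X.powerset := by
      ext Z
      simp only [Finset.mem_filter, Finset.mem_powerset]
      exact ⟨fun h => h.2, fun h => ⟨h.trans hXΛ, h⟩⟩
    have e2 : Λ.powerset.filter (fun Z => ¬ Z ⊆ X) =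
        SS ∪ TT := by
      rw [hSS, hTT]
      ext Z
      simp only [Finset.mem_filter, Finset.mem_union, Finset.mem_powerset,
        Finset.sdiff_nonempty]
      tauto
    have e3 : Disjoint SS TT := by
      rw [hSS, hTT, Finset.disjoint_filter]
      tauto
    calc HL r = ∑ Z ∈ Λ.powerset.filter (fun Z => Z ⊆ X), Φ Z r
          + ∑ Z ∈ Λ.powerset.filter (fun Z => ¬ Z ⊆ X), Φ Z r := by
          rw [hHL, Finset.sum_filter_add_sum_filter_not]
      _ = HX r + (F1 r + F2 r) := by
          rw [e1, e2, Finset.sum_union e3, hHX, hF1, hF2]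
      _ = HX r + F1 r + F2 r := by rw [add_assoc]
  -- star / self-adjointness facts
  have hstarHL : ∀ r ∈ I, star (HL r) = HL r := by
    intro r hr; simp only [hHL]; rw [star_sum]
    exact Finset.sum_congr rfl fun Z _ => hΦsa Z r hr
  have hstarHX : ∀ r ∈ I, star (HX r) = HX r := by
    intro r hr; simp only [hHX]; rw [star_sum]
    exact Finset.sum_congr rfl fun Z _ => hΦsa Z r hr
  have hstarF1 : ∀ r ∈ I, star (F1 r) = F1 r := by
    intro r hr; simp only [hF1]; rw [star_sum]
    exact Finset.sum_congr rfl fun Z _ => hΦsa Z r hr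
  -- commutation of F2 with the X-algebra
  have hcommX : ∀ r ∈ I, ∀ y ∈ carSpan a X, F2 r * y = y * F2 r := by
    intro r hr y hy
    simp only [hF2]
    rw [Finset.sum_mul, Finset.mul_sum]
    refine Finset.sum_congr rfl fun Z hZ => ?_
    have hZX : ∀ x ∈ X, x ∉ Z := by
      intro x hxX hxZ
      have hZ' := hZ
      rw [hTT] at hZ'
      have h1 : ¬(Z ∩ X).Nonempty := (Finset.mem_filter.mp hZ').2.1
      exact h1 ⟨x, Finset.mem_inter.mpr ⟨hxZ, hxX⟩⟩
    exact CARaux.spanEven_comm_span hCAR (hΦeven Z r hr) hZX hy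
  -- unitarity facts
  have hwu : ∀ r ∈ I, star (U r s) * U r s = 1 :=
    fun r hr => Unitary.star_mul_self_of_mem (hUunitary s hs r hr)
  have huw : ∀ r ∈ I, U r s * star (U r s) = 1 :=
    fun r hr => Unitary.mul_star_self_of_mem (hUunitary s hs r hr)
  have hsvv : ∀ r ∈ I, star (V r s) * V r s = 1 :=
    fun r hr => Unitary.star_mul_self_of_mem (hVunitary s hs r hr)
  have hvsv : ∀ r ∈ I, V r s * star (V r s) = 1 :=
    fun r hr => Unitary.mul_star_self_of_mem (hVunitary s hs r hr)
  set Cc : A := star (V t s) * A₀ * V t s with hCc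
  set Gf : ℝ → A := fun r => star (U r s) * (V r s * Cc * star (V r s)) * U r s with hGf
  set ff : ℝ → A := fun r => Gf r * B₀ + B₀ * Gf r with hff
  set D1f : ℝ → A := fun r => star (U r s) * F1 r * U r s with hD1f
  set ccf : ℝ → A := fun r => D1f r * B₀ - B₀ * D1f r with hccf
  set Rf : ℝ → A := fun r => -(Complex.I • (Gf r * ccf r + ccf r * Gf r)) with hRf
  set g0 : ℝ → ℝ := fun r => 2 * ‖A₀‖ *
      ∑ Z ∈ SS, ‖(star (U r s) * Φ Z r * U r s) * B₀
        - B₀ * (star (U r s) * Φ Z r * U r s)‖ with hg0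
  -- derivatives
  have hu : ∀ r ∈ I, HasDerivWithinAt (fun r => U r s)
      ((-Complex.I) • (HL r * U r s)) I r := fun r hr => hUode s hs r hr
  have hv : ∀ r ∈ I, HasDerivWithinAt (fun r => V r s)
      ((-Complex.I) • (HX r * V r s)) I r := fun r hr => hVode s hs r hr
  have hw : ∀ r ∈ I, HasDerivWithinAt (fun r => star (U r s))
      (Complex.I • (star (U r s) * HL r)) I r := by
    intro r hr
    have h1 := (hu r hr).star
    have h2 : star ((-Complex.I) • (HL r * U r s))
        = Complex.I • (star (U r s) * HL r) := by
      rw [star_smul, star_mul, hstarHL r hr]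
      simp [Complex.conj_I]
    rwa [h2] at h1
  have hsv : ∀ r ∈ I, HasDerivWithinAt (fun r => star (V r s))
      (Complex.I • (star (V r s) * HX r)) I r := by
    intro r hr
    have h1 := (hv r hr).star
    have h2 : star ((-Complex.I) • (HX r * V r s))
        = Complex.I • (star (V r s) * HX r) := by
      rw [star_smul, star_mul, hstarHX r hr]
      simp [Complex.conj_I]
    rwa [h2] at h1
  -- membership facts for the commutation
  have hcomm_chain : ∀ r ∈ I, ∀ z : A,
      F2 r * (V r s * (Cc * (star (V r s) * z)))
        = V r s * (Cc * (star (V r s) * (F2 r * z))) := by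
    intro r hr z
    have hmv : V r s ∈ carSpan a X := hVmem s hs r hr
    have hmsv : star (V r s) ∈ carSpan a X := CARaux.star_mem_carSpan (hVmem s hs r hr)
    have hmvt : V t s ∈ carSpan a X := hVmem s hs t ht
    have hmsvt : star (V t s) ∈ carSpan a X := CARaux.star_mem_carSpan (hVmem s hs t ht)
    have c1 := hcommX r hr _ hmv
    have c2 := hcommX r hr _ hmsv
    have c3 := hcommX r hr _ hmvt
    have c4 := hcommX r hr _ hmsvt
    have c5 := hcommX r hr _ hA
    have cC : F2 r * Cc = Cc * F2 r := by
      rw [hCc]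
      calc F2 r * (star (V t s) * A₀ * V t s)
          = ((F2 r * star (V t s)) * A₀) * V t s := by
            rw [← mul_assoc, ← mul_assoc]
        _ = ((star (V t s) * F2 r) * A₀) * V t s := by rw [c4]
        _ = (star (V t s) * (F2 r * A₀)) * V t s := by
            rw [mul_assoc (star (V t s))]
        _ = (star (V t s) * (A₀ * F2 r)) * V t s := by rw [c5]
        _ = ((star (V t s) * A₀) * F2 r) * V t s := by
            rw [← mul_assoc (star (V t s))]
        _ = (star (V t s) * A₀) * (F2 r * V t s) := by
            rw [mul_assoc]
        _ = (star (V t s) * A₀) * (V t s * F2 r) := by rw [c3]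
        _ = star (V t s) * A₀ * V t s * F2 r := by rw [← mul_assoc]
    calc F2 r * (V r s * (Cc * (star (V r s) * z)))
        = (F2 r * V r s) * (Cc * (star (V r s) * z)) := by rw [← mul_assoc]
      _ = (V r s * F2 r) * (Cc * (star (V r s) * z)) := by rw [c1]
      _ = V r s * (F2 r * (Cc * (star (V r s) * z))) := by rw [mul_assoc]
      _ = V r s * ((F2 r * Cc) * (star (V r s) * z)) := by
          rw [← mul_assoc (F2 r) Cc (star (V r s) * z)]
      _ = V r s * ((Cc * F2 r) * (star (V r s) * z)) := by rw [cC]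
      _ = V r s * (Cc * (F2 r * (star (V r s) * z))) := by
          rw [mul_assoc Cc (F2 r) (star (V r s) * z)]
      _ = V r s * (Cc * ((F2 r * star (V r s)) * z)) := by
          rw [← mul_assoc (F2 r) (star (V r s)) z]
      _ = V r s * (Cc * ((star (V r s) * F2 r) * z)) := by rw [c2]
      _ = V r s * (Cc * (star (V r s) * (F2 r * z))) := by
          rw [mul_assoc (star (V r s)) (F2 r) z]
  -- derivative of G and f
  have hG : ∀ r ∈ I, HasDerivWithinAt Gf
      (Complex.I • (D1f r * Gf r - Gf r * D1f r)) I r := by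
    intro r hr
    have hP : HasDerivWithinAt (fun r => V r s * Cc * star (V r s))
        (((-Complex.I) • (HX r * V r s)) * Cc * star (V r s)
          + (V r s * Cc) * (Complex.I • (star (V r s) * HX r))) I r :=
      ((hv r hr).mul_const Cc).mul (hsv r hr)
    have hGd : HasDerivWithinAt Gf
        (((Complex.I • (star (U r s) * HL r)) * (V r s * Cc * star (V r s))
            + star (U r s) * (((-Complex.I) • (HX r * V r s)) * Cc * star (V r s)
              + (V r s * Cc) * (Complex.I • (star (V r s) * HX r)))) * U r s
          + (star (U r s) * (V r s * Cc * star (V r s)))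
            * ((-Complex.I) • (HL r * U r s))) I r :=
      (((hw r hr).mul hP).mul (hu r hr))
    have heq := CARaux.Gderiv_alg (U r s) (star (U r s)) (V r s) (star (V r s)) Cc
      (HL r) (HX r) (F1 r) (F2 r)
      (fun z => by rw [← mul_assoc, huw r hr, one_mul])
      (hHsplit r) (hcomm_chain r hr)
    rw [heq] at hGd
    exact hGd
  have hf : ∀ r ∈ I, HasDerivWithinAt ff
      (Complex.I • (D1f r * ff r - ff r * D1f r) + Rf r) I r := by
    intro r hr
    have h1 : HasDerivWithinAt ff
        ((Complex.I • (D1f r * Gf r - Gf r * D1f r)) * B₀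
          + B₀ * (Complex.I • (D1f r * Gf r - Gf r * D1f r))) I r :=
      ((hG r hr).mul_const B₀).add ((hG r hr).const_mul B₀)
    have h2 := CARaux.anticomm_alg (D1f r) (Gf r) B₀
    rw [h2] at h1
    exact h1
  -- norm bounds
  have hnGf : ∀ r ∈ I, ‖Gf r‖ ≤ ‖A₀‖ := by
    intro r hr
    have n1 : ‖U r s‖ = 1 := hun _ (hUunitary s hs r hr)
    have n2 : ‖star (U r s)‖ = 1 := by rw [norm_star]; exact n1
    have n3 : ‖V r s‖ = 1 := hun _ (hVunitary s hs r hr)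
    have n4 : ‖star (V r s)‖ = 1 := by rw [norm_star]; exact n3
    have n5 : ‖V t s‖ = 1 := hun _ (hVunitary s hs t ht)
    have n6 : ‖star (V t s)‖ = 1 := by rw [norm_star]; exact n5
    have nC : ‖Cc‖ ≤ ‖A₀‖ := by
      rw [hCc]
      calc ‖star (V t s) * A₀ * V t s‖ ≤ ‖star (V t s) * A₀‖ * ‖V t s‖ := norm_mul_le _ _
        _ ≤ ‖star (V t s)‖ * ‖A₀‖ * ‖V t s‖ := by gcongr; exact norm_mul_le _ _
        _ = ‖A₀‖ := by rw [n5, n6, one_mul, mul_one]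
    have nP : ‖V r s * Cc * star (V r s)‖ ≤ ‖A₀‖ := by
      calc ‖V r s * Cc * star (V r s)‖ ≤ ‖V r s * Cc‖ * ‖star (V r s)‖ := norm_mul_le _ _
        _ ≤ ‖V r s‖ * ‖Cc‖ * ‖star (V r s)‖ := by gcongr; exact norm_mul_le _ _
        _ ≤ ‖A₀‖ := by rw [n3, n4, one_mul, mul_one]; exact nC
    simp only [hGf]
    calc ‖star (U r s) * (V r s * Cc * star (V r s)) * U r s‖
        ≤ ‖star (U r s) * (V r s * Cc * star (V r s))‖ * ‖U r s‖ := norm_mul_le _ _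
      _ ≤ ‖star (U r s)‖ * ‖V r s * Cc * star (V r s)‖ * ‖U r s‖ := by
          gcongr; exact norm_mul_le _ _
      _ ≤ ‖A₀‖ := by rw [n1, n2, one_mul, mul_one]; exact nP
  have hccb : ∀ r ∈ I, ‖ccf r‖ ≤ ∑ Z ∈ SS, ‖(star (U r s) * Φ Z r * U r s) * B₀
      - B₀ * (star (U r s) * Φ Z r * U r s)‖ := by
    intro r hr
    have h1 : ccf r = ∑ Z ∈ SS, ((star (U r s) * Φ Z r * U r s) * B₀
        - B₀ * (star (U r s) * Φ Z r * U r s)) := by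
      simp only [hccf, hD1f, hF1]
      rw [Finset.mul_sum, Finset.sum_mul, Finset.sum_mul, Finset.mul_sum,
        ← Finset.sum_sub_distrib]
    rw [h1]
    exact norm_sum_le _ _
  have hRb : ∀ r ∈ I, ‖Rf r‖ ≤ g0 r := by
    intro r hr
    have h1 : ‖Rf r‖ = ‖Gf r * ccf r + ccf r * Gf r‖ := by
      simp only [hRf]
      rw [norm_neg, norm_smul, Complex.norm_I, one_mul]
    have h2 : ‖Gf r * ccf r + ccf r * Gf r‖ ≤ 2 * ‖Gf r‖ * ‖ccf r‖ := by
      calc ‖Gf r * ccf r + ccf r * Gf r‖ ≤ ‖Gf r * ccf r‖ + ‖ccf r * Gf r‖ :=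
            norm_add_le _ _
        _ ≤ ‖Gf r‖ * ‖ccf r‖ + ‖ccf r‖ * ‖Gf r‖ :=
            add_le_add (norm_mul_le _ _) (norm_mul_le _ _)
        _ = 2 * ‖Gf r‖ * ‖ccf r‖ := by ring
    rw [h1]
    simp only [hg0]
    have h3 := hnGf r hr
    have h4 := hccb r hr
    have h5 : (0:ℝ) ≤ ‖ccf r‖ := norm_nonneg _
    nlinarith [norm_nonneg (Gf r), norm_nonneg A₀,
      Finset.sum_nonneg (fun Z (_ : Z ∈ SS) => norm_nonneg
        ((star (U r s) * Φ Z r * U r s) * B₀ - B₀ * (star (U r s) * Φ Z r * U r s)))]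
  have hD1sa : ∀ r ∈ I, star (D1f r) = D1f r := by
    intro r hr
    simp only [hD1f]
    rw [star_mul, star_mul, star_star, hstarF1 r hr, mul_assoc]
  -- continuity
  have hu_cont : ContinuousOn (fun r => U r s) I :=
    fun r hr => (hu r hr).continuousWithinAt
  have hw_cont : ContinuousOn (fun r => star (U r s)) I :=
    continuous_star.comp_continuousOn hu_cont
  have hsummand_cont : ∀ Z ∈ SS, ContinuousOn (fun r =>
      ‖(star (U r s) * Φ Z r * U r s) * B₀ - B₀ * (star (U r s) * Φ Z r * U r s)‖) I := by
    intro Z _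
    have h1 : ContinuousOn (fun r => star (U r s) * Φ Z r * U r s) I :=
      (hw_cont.mul (hΦcont Z)).mul hu_cont
    exact ((h1.mul continuousOn_const).sub (continuousOn_const.mul h1)).norm
  have hg0_cont : ContinuousOn g0 I := by
    simp only [hg0]
    exact continuousOn_const.mul (continuousOn_finset_sum SS hsummand_cont)
  -- clamped bound function and its integral
  set clamp : ℝ → ℝ := fun r => max s (min r t) with hclampdef
  have hclamp_cont : Continuous clamp :=
    continuous_const.max (continuous_id.min continuous_const)
  have hclamp_mem : ∀ r : ℝ, clamp r ∈ Set.Icc s t := by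
    intro r
    exact ⟨le_max_left _ _, max_le hst (min_le_right _ _)⟩
  have hclamp_id : ∀ r ∈ Set.Icc s t, clamp r = r := by
    intro r hr
    simp only [hclampdef]
    rw [min_eq_left hr.2, max_eq_right hr.1]
  set gg : ℝ → ℝ := fun r => g0 (clamp r) with hggdef
  have hgg_cont : Continuous gg := by
    simp only [hggdef]
    exact (hg0_cont.mono hIcc).comp_continuous hclamp_cont hclamp_mem
  have hgg_eq : ∀ r ∈ Set.Icc s t, gg r = g0 r := by
    intro r hr
    simp only [hggdef]
    rw [hclamp_id r hr]
  set Bf : ℝ → ℝ := fun r => ‖ff s‖ + ∫ τ in s..r, gg τ with hBdef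
  have hB' : ∀ x : ℝ, HasDerivAt Bf (gg x) x := by
    intro x
    have h1 := hgg_cont.integral_hasStrictDerivAt s x
    have h2 := (hasDerivAt_const x ‖ff s‖).add h1.hasDerivAt
    rw [zero_add] at h2
    exact h2
  have hBc : ContinuousOn Bf (Set.Icc s t) :=
    fun x _ => (hB' x).continuousAt.continuousWithinAt
  have hff_cont : ContinuousOn (fun r => ‖ff r‖) (Set.Icc s t) :=
    ContinuousOn.norm (fun r hr => ((hf r (hIcc hr)).mono hIcc).continuousWithinAt)
  -- the liminf slope bound
  have hbound : ∀ x ∈ Set.Ico s t, ∀ ρ : ℝ, gg x < ρ →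
      ∃ᶠ z in nhdsWithin x (Set.Ioi x), slope (fun r => ‖ff r‖) x z < ρ := by
    intro x hx ρ hρ
    have hxIcc : x ∈ Set.Icc s t := ⟨hx.1, le_of_lt hx.2⟩
    have hxI : x ∈ I := hIcc hxIcc
    rw [hgg_eq x hxIcc] at hρ
    set E : A := Complex.I • D1f x with hEdef
    have hEskew : star E = -E := by
      rw [hEdef, star_smul, Complex.star_def, Complex.conj_I, hD1sa x hxI, neg_smul]
    set Fx : A := Complex.I • (D1f x * ff x - ff x * D1f x) + Rf x with hFxdef
    have hfd : HasDerivWithinAt ff Fx (Set.Icc s t) x := (hf x hxI).mono hIcc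
    have hslope : Filter.Tendsto (slope ff x)
        (nhdsWithin x (Set.Icc s t \ {x})) (nhds Fx) :=
      hasDerivWithinAt_iff_tendsto_slope.mp hfd
    have hsub : Set.Ioc x t ⊆ Set.Icc s t \ {x} := by
      intro z hz
      exact ⟨⟨le_trans hx.1 (le_of_lt hz.1), hz.2⟩, ne_of_gt hz.1⟩
    have htends : Filter.Tendsto (slope ff x) (nhdsWithin x (Set.Ioc x t)) (nhds Fx) :=
      hslope.mono_left (nhdsWithin_mono _ hsub)
    set ε : ℝ := ρ - g0 x with hεdef
    have hεpos : 0 < ε := by rw [hεdef]; linarith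
    have hev1 : ∀ᶠ z in nhdsWithin x (Set.Ioc x t), ‖slope ff x z - Fx‖ < ε / 2 := by
      have h1 := Metric.tendsto_nhds.mp htends (ε / 2) (by linarith)
      filter_upwards [h1] with z hz
      rw [dist_eq_norm] at hz
      exact hz
    set δ : ℝ := ε / 2 / (2 * ‖E‖ ^ 2 * ‖ff x‖ + 1) with hδdef
    have hδpos : 0 < δ := by rw [hδdef]; positivity
    have hev2 : ∀ᶠ z in nhdsWithin x (Set.Ioc x t), z - x < δ := by
      have h1 : Filter.Tendsto (fun z : ℝ => z - x) (nhds x) (nhds 0) := by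
        have := (continuous_id.sub (continuous_const (y := x))).tendsto x
        simpa [Pi.sub_def] using this
      have h2 : ∀ᶠ z in nhds x, z - x < δ := h1.eventually_lt_const hδpos
      exact h2.filter_mono nhdsWithin_le_nhds
    have hev3 : ∀ᶠ z in nhdsWithin x (Set.Ioc x t),
        slope (fun r => ‖ff r‖) x z < ρ := by
      filter_upwards [hev1, hev2, self_mem_nhdsWithin] with z h1z h2z hzmem
      have hzx : 0 < z - x := sub_pos.mpr hzmem.1
      have e1 : (z - x) • slope ff x z = ff z - ff x := by
        rw [slope_def_module, smul_inv_smul₀ (ne_of_gt hzx)]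
      have e3 : ff z = (ff x + (z - x) • Fx) + (z - x) • (slope ff x z - Fx) := by
        rw [smul_sub, e1]
        abel
      have e2 : ‖ff z‖ ≤ ‖ff x + (z - x) • Fx‖ + (z - x) * ‖slope ff x z - Fx‖ := by
        rw [e3]
        calc ‖(ff x + (z - x) • Fx) + (z - x) • (slope ff x z - Fx)‖
            ≤ ‖ff x + (z - x) • Fx‖ + ‖(z - x) • (slope ff x z - Fx)‖ := norm_add_le _ _
          _ = ‖ff x + (z - x) • Fx‖ + (z - x) * ‖slope ff x z - Fx‖ := by
              rw [norm_smul, Real.norm_eq_abs, abs_of_pos hzx]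
      have e5' : E * ff x - ff x * E = Complex.I • (D1f x * ff x - ff x * D1f x) := by
        rw [hEdef, smul_mul_assoc, mul_smul_comm, ← smul_sub]
      have e5 : ff x + (z - x) • Fx
          = (ff x + (z - x) • (E * ff x - ff x * E)) + (z - x) • Rf x := by
        rw [hFxdef, ← e5', smul_add, ← add_assoc]
      have e4 : ‖ff x + (z - x) • Fx‖
          ≤ (‖ff x‖ + 2 * (z - x) ^ 2 * ‖E‖ ^ 2 * ‖ff x‖) + (z - x) * ‖Rf x‖ := by
        rw [e5]
        refine le_trans (norm_add_le _ _) (add_le_add ?_ ?_)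
        · exact CARaux.key_ineq (le_of_eq hnorm1) E (ff x) hEskew (z - x)
        · rw [norm_smul, Real.norm_eq_abs, abs_of_pos hzx]
      have h8 : 2 * (z - x) * ‖E‖ ^ 2 * ‖ff x‖ < ε / 2 := by
        have h9 : (z - x) * (2 * ‖E‖ ^ 2 * ‖ff x‖ + 1) < ε / 2 := by
          have h10 := mul_lt_mul_of_pos_right h2z
            (show (0:ℝ) < 2 * ‖E‖ ^ 2 * ‖ff x‖ + 1 by positivity)
          rwa [hδdef, div_mul_cancel₀ _ (by positivity : 2 * ‖E‖ ^ 2 * ‖ff x‖ + 1 ≠ 0)]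
            at h10
        nlinarith [hzx]
      have hr1 : ‖Rf x‖ ≤ g0 x := hRb x hxI
      rw [slope_def_field, div_lt_iff₀ hzx]
      have h11 : ρ = g0 x + ε := by rw [hεdef]; ring
      nlinarith [e2, e4, mul_lt_mul_of_pos_left h8 hzx,
        mul_le_mul_of_nonneg_left hr1 (le_of_lt hzx),
        mul_lt_mul_of_pos_left h1z hzx, hzx]
    have hle : nhdsWithin x (Set.Ioi x) ≤ nhdsWithin x (Set.Ioc x t) :=
      nhdsWithin_le_of_mem (Ioc_mem_nhdsGT hx.2)
    exact (hev3.filter_mono hle).frequently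
  -- fencing
  have hfence : ∀ ⦃x : ℝ⦄, x ∈ Set.Icc s t → ‖ff x‖ ≤ Bf x := by
    refine image_le_of_liminf_slope_right_le_deriv_boundary hff_cont ?_ hBc ?_ hbound
    · simp [hBdef]
    · intro x _
      exact (hB' x).hasDerivWithinAt
  have hft := hfence ⟨hst, le_refl t⟩
  -- endpoint identifications
  have hGt : Gf t = star (U t s) * A₀ * U t s := by
    have h1 : V t s * Cc * star (V t s) = A₀ := by
      rw [hCc, ← mul_assoc, ← mul_assoc, hvsv t ht, one_mul, mul_assoc, hvsv t ht, mul_one]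
    simp only [hGf]
    rw [h1]
  have hGs : Gf s = Cc := by
    simp only [hGf, hUinit s hs, hVinit s hs, star_one, one_mul, mul_one]
  have hfft : ff t = (star (U t s) * A₀ * U t s) * B₀ + B₀ * (star (U t s) * A₀ * U t s) := by
    simp only [hff, hGt]
  have hffs : ff s = Cc * B₀ + B₀ * Cc := by simp only [hff, hGs]
  -- identify the integral
  have hint_eq : (∫ τ in s..t, gg τ) = 2 * ‖A₀‖ * ∑ Z ∈ SS, ∫ r in s..t,
      ‖(star (U r s) * Φ Z r * U r s) * B₀ - B₀ * (star (U r s) * Φ Z r * U r s)‖ := by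
    have h1 : (∫ τ in s..t, gg τ) = ∫ τ in s..t, g0 τ := by
      apply intervalIntegral.integral_congr
      intro τ hτ
      rw [Set.uIcc_of_le hst] at hτ
      exact hgg_eq τ hτ
    have h2 : ∀ Z ∈ SS, IntervalIntegrable (fun r =>
        ‖(star (U r s) * Φ Z r * U r s) * B₀
          - B₀ * (star (U r s) * Φ Z r * U r s)‖) volume s t := by
      intro Z hZ
      exact ((hsummand_cont Z hZ).mono
        (by rw [Set.uIcc_of_le hst]; exact hIcc)).intervalIntegrable
    rw [h1]
    simp only [hg0]
    rw [intervalIntegral.integral_const_mul, intervalIntegral.integral_finset_sum h2]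
  -- final chain
  calc ‖(star (U t s) * A₀ * U t s) * B₀ + B₀ * (star (U t s) * A₀ * U t s)‖
      = ‖ff t‖ := by rw [hfft]
    _ ≤ Bf t := hft
    _ = ‖ff s‖ + ∫ τ in s..t, gg τ := by simp only [hBdef]
    _ = ‖Cc * B₀ + B₀ * Cc‖ + 2 * ‖A₀‖ * ∑ Z ∈ SS, ∫ r in s..t,
          ‖(star (U r s) * Φ Z r * U r s) * B₀
            - B₀ * (star (U r s) * Φ Z r * U r s)‖ := by rw [hffs, hint_eq]
end
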